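/- arXiv:2201.08769 — 4 statements merged into one kernel-verified Lean document; each statement's English description precedes it below -/
import Mathlib

section
/- The derivative of the one-parameter Mittag-Leffler function of −λt^α satisfies (d/dt) E_{α,1}(−λ t^α) = −λ t^{α−1} E_{α,α}(−λ t^α) for t > 0, λ ∈ ℝ, 0 < α. -/
open MeasureTheory Real Set Filter

/-- Mittag-Leffler function. -/
noncomputable def ML (α β z : ℝ) : ℝ :=
  ∑' k : ℕ, z ^ k / Real.Gamma (α * k + β)

lemma gamma_lower {α : ℝ} (hα : 0 < α) (D : ℝ) :
    ∀ᶠ k : ℕ in atTop, D ^ k ≤ Real.Gamma (α * k + 1) := by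
  obtain ⟨b, hb⟩ := exists_nat_ge (2 / α)
  set E : ℝ := (max |D| 1) ^ b with hE
  have hD1 : (1 : ℝ) ≤ max |D| 1 := le_max_right _ _
  have hfac : ∀ᶠ n : ℕ in atTop, E ^ n ≤ (n.factorial : ℝ) := by
    have h0 : Tendsto (fun n : ℕ => E ^ n / (n.factorial : ℝ)) atTop (nhds 0) :=
      FloorSemiring.tendsto_pow_div_factorial_atTop E
    filter_upwards [h0.eventually (ge_mem_nhds (show (0:ℝ) < 1 by norm_num))] with n hn
    have hpos : (0 : ℝ) < n.factorial := by positivity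
    exact (div_le_one hpos).1 hn
  obtain ⟨N, hN⟩ := eventually_atTop.1 hfac
  have h2 : Tendsto (fun k : ℕ => α * k) atTop atTop :=
    (tendsto_natCast_atTop_atTop (R := ℝ)).const_mul_atTop hα
  filter_upwards [h2.eventually_ge_atTop ((N : ℝ) + 4)] with k hk
  have hαk4 : (N : ℝ) + 4 ≤ α * k := hk
  have hαk0 : (0 : ℝ) ≤ α * k := by linarith
  obtain ⟨m, hm⟩ : ∃ m : ℕ, m = ⌊α * (k : ℝ)⌋₊ := ⟨_, rfl⟩
  have hm1 : (m : ℝ) ≤ α * k := by rw [hm]; exact Nat.floor_le hαk0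
  have hm2 : α * (k : ℝ) < m + 1 := by rw [hm]; push_cast; exact Nat.lt_floor_add_one _
  have hmN : (N : ℝ) + 3 ≤ (m : ℝ) := by linarith
  have hmN' : N + 3 ≤ m := by exact_mod_cast hmN
  obtain ⟨n, rfl⟩ : ∃ n, m = n + 1 := ⟨m - 1, by omega⟩
  have hnN : N ≤ n := by omega
  have hnR : α * (k : ℝ) / 2 ≤ (n : ℝ) := by
    have : (n : ℝ) + 2 = (n + 1 : ℕ) + 1 := by push_cast; ring
    nlinarith [hm2]
  have hkbn : k ≤ b * n := by
    have h1 : (k : ℝ) ≤ (b : ℝ) * n := by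
      have hb0 : (0 : ℝ) ≤ 2 / α := by positivity
      have := mul_le_mul hb hnR (by positivity) (le_trans hb0 hb)
      calc (k : ℝ) = 2 / α * (α * k / 2) := by field_simp
        _ ≤ (b : ℝ) * n := this
    exact_mod_cast h1
  calc D ^ k ≤ |D| ^ k := by
        calc D ^ k ≤ |D ^ k| := le_abs_self _
          _ = |D| ^ k := abs_pow D k
    _ ≤ (max |D| 1) ^ k := pow_le_pow_left₀ (abs_nonneg D) (le_max_left _ _) k
    _ ≤ (max |D| 1) ^ (b * n) := pow_le_pow_right₀ hD1 hkbn
    _ = E ^ n := by rw [hE, ← pow_mul, Nat.mul_comm]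
    _ ≤ (n.factorial : ℝ) := hN n hnN
    _ = Real.Gamma ((n : ℝ) + 1) := (Real.Gamma_nat_eq_factorial n).symm
    _ ≤ Real.Gamma (α * k + 1) := by
        apply Real.Gamma_strictMonoOn_Ici.monotoneOn
        · simp only [mem_Ici]
          have : (3 : ℝ) ≤ (n : ℝ) + 1 := by
            have : (N : ℝ) + 3 ≤ (n : ℝ) + 1 := by exact_mod_cast hmN
            linarith [Nat.cast_nonneg (α := ℝ) N]
          linarith
        · simp only [mem_Ici]; linarith
        · have : ((n : ℝ) + 1) = ((n + 1 : ℕ) : ℝ) := by push_cast; ring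
          rw [this]; linarith [hm1]

lemma summable_aux {α : ℝ} (hα : 0 < α) {C : ℝ} (hC : 0 ≤ C) :
    Summable (fun k : ℕ => ((k : ℝ) + 1) * C ^ k / Real.Gamma (α * k + 1)) := by
  have hs : Summable (fun k : ℕ => ((k : ℝ) + 1) * (1 / 2) ^ k) := by
    have h1 : Summable (fun k : ℕ => (k : ℝ) ^ 1 * (1 / 2 : ℝ) ^ k) :=
      summable_pow_mul_geometric_of_norm_lt_one 1
        (by rw [Real.norm_eq_abs, abs_of_nonneg (by norm_num : (0:ℝ) ≤ 1/2)]; norm_num)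
    have h2 : Summable (fun k : ℕ => (1 / 2 : ℝ) ^ k) :=
      summable_geometric_of_lt_one (by norm_num) (by norm_num)
    simpa [pow_one, add_mul, one_mul] using h1.add h2
  apply hs.of_norm_bounded_eventually
  rw [Nat.cofinite_eq_atTop]
  filter_upwards [gamma_lower hα (2 * C + 2)] with k hk
  have hD : (0 : ℝ) < 2 * C + 2 := by linarith
  have hDk : (0 : ℝ) < (2 * C + 2) ^ k := by positivity
  have hΓ : (0 : ℝ) < Real.Gamma (α * k + 1) := Real.Gamma_pos_of_pos (by positivity)
  have hk1 : (0 : ℝ) ≤ (k : ℝ) + 1 := by positivity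
  rw [Real.norm_eq_abs, abs_of_nonneg (by positivity)]
  calc ((k : ℝ) + 1) * C ^ k / Real.Gamma (α * k + 1)
      ≤ ((k : ℝ) + 1) * C ^ k / (2 * C + 2) ^ k := by gcongr
    _ = ((k : ℝ) + 1) * (C / (2 * C + 2)) ^ k := by rw [div_pow, mul_div_assoc]
    _ ≤ ((k : ℝ) + 1) * (1 / 2) ^ k := by
        have hhalf : C / (2 * C + 2) ≤ 1 / 2 := by
          rw [div_le_div_iff₀ hD (by norm_num : (0:ℝ) < 2)]; linarith
        exact mul_le_mul_of_nonneg_left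
          (pow_le_pow_left₀ (by positivity) hhalf k) hk1

theorem deriv_MittagLeffler
    (α lam : ℝ) (hα : 0 < α) :
    ∀ t : ℝ, 0 < t →
      deriv (fun r => ML α 1 (-lam * r ^ α)) t =
        -lam * t ^ (α - 1) * ML α α (-lam * t ^ α) := by
  intro t ht
  set M : ℝ := max (2 * t) 1 with hM
  have hM1 : (1 : ℝ) ≤ M := le_max_right _ _
  have hM0 : (0 : ℝ) ≤ M := by linarith
  set C : ℝ := |lam| * M ^ α with hC
  have hC0 : (0 : ℝ) ≤ C := by positivity
  set s : Set ℝ := Ioo (t / 2) (2 * t) with hs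
  have hso : IsOpen s := isOpen_Ioo
  have hsc : IsPreconnected s := isPreconnected_Ioo
  have htm : t ∈ s := ⟨by linarith, by linarith⟩
  have hspos : ∀ r ∈ s, 0 < r := fun r hr => lt_trans (by linarith) hr.1
  set g : ℕ → ℝ → ℝ := fun k r => (-lam) ^ k * r ^ (α * k) / Real.Gamma (α * k + 1)
    with hgdef
  set g' : ℕ → ℝ → ℝ :=
    fun k r => (-lam) ^ k * (α * k * r ^ (α * k - 1)) / Real.Gamma (α * k + 1) with hg'def
  set u : ℕ → ℝ := fun k => 2 / t * α * (((k : ℝ) + 1) * C ^ k / Real.Gamma (α * k + 1))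
    with hu
  have hΓpos : ∀ k : ℕ, 0 < Real.Gamma (α * k + 1) := fun k =>
    Real.Gamma_pos_of_pos (by positivity)
  have hu_sum : Summable u := (summable_aux hα hC0).mul_left _
  have hg : ∀ (k : ℕ), ∀ r ∈ s, HasDerivAt (g k) (g' k r) r := by
    intro k r hr
    have hr0 : 0 < r := hspos r hr
    have h1 : HasDerivAt (fun x : ℝ => x ^ (α * k)) (α * k * r ^ (α * k - 1)) r :=
      Real.hasDerivAt_rpow_const (Or.inl hr0.ne')
    exact (h1.const_mul ((-lam) ^ k)).div_const _
  have hrpow_bound : ∀ (k : ℕ), ∀ r ∈ s, r ^ (α * k - 1) ≤ 2 / t * (M ^ α) ^ k := by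
    intro k r hr
    have hr0 : 0 < r := hspos r hr
    have hrM : r ≤ M := le_trans hr.2.le (le_max_left _ _)
    have h1 : r ^ (α * k - 1) = r ^ (α * k) / r := by
      rw [Real.rpow_sub hr0, Real.rpow_one]
    have h2 : r ^ (α * k) ≤ M ^ (α * k) :=
      Real.rpow_le_rpow hr0.le hrM (by positivity)
    have h3 : M ^ (α * (k : ℝ)) = (M ^ α) ^ k := by
      rw [Real.rpow_mul hM0, Real.rpow_natCast]
    have h4 : 1 / r ≤ 2 / t := by
      rw [div_le_div_iff₀ hr0 ht]
      have := hr.1; linarith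
    calc r ^ (α * k - 1) = r ^ (α * k) * (1 / r) := by rw [h1]; ring
      _ ≤ M ^ (α * k) * (2 / t) := by
          apply mul_le_mul h2 h4 (by positivity) (by positivity)
      _ = 2 / t * (M ^ α) ^ k := by rw [h3]; ring
  have hg' : ∀ (k : ℕ), ∀ r ∈ s, ‖g' k r‖ ≤ u k := by
    intro k r hr
    have hr0 : 0 < r := hspos r hr
    have hΓ := hΓpos k
    have hinner : (0:ℝ) ≤ α * k * r ^ (α * k - 1) :=
      mul_nonneg (by positivity) (Real.rpow_nonneg hr0.le _)
    have hnorm : ‖g' k r‖ = |lam| ^ k * (α * k * r ^ (α * k - 1)) /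
        Real.Gamma (α * k + 1) := by
      simp only [hg'def, Real.norm_eq_abs, abs_div, abs_of_pos hΓ, abs_mul, abs_pow,
        abs_neg, abs_of_nonneg hinner]
    have hineq : |lam| ^ k * (α * k * r ^ (α * k - 1)) ≤
        2 / t * α * (((k : ℝ) + 1) * C ^ k) := by
      have h1 : r ^ (α * k - 1) ≤ 2 / t * (M ^ α) ^ k := hrpow_bound k r hr
      have h2 : α * (k : ℝ) ≤ α * ((k : ℝ) + 1) :=
        mul_le_mul_of_nonneg_left (by linarith) hα.le
      calc |lam| ^ k * (α * k * r ^ (α * k - 1))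
          ≤ |lam| ^ k * (α * ((k : ℝ) + 1) * (2 / t * (M ^ α) ^ k)) := by
            apply mul_le_mul_of_nonneg_left _ (by positivity)
            exact mul_le_mul h2 h1 (Real.rpow_nonneg hr0.le _) (by positivity)
        _ = 2 / t * α * (((k : ℝ) + 1) * C ^ k) := by rw [hC, mul_pow]; ring
    have hfin : |lam| ^ k * (α * k * r ^ (α * k - 1)) / Real.Gamma (α * k + 1) ≤
        2 / t * α * (((k : ℝ) + 1) * C ^ k) / Real.Gamma (α * k + 1) := by gcongr
    rw [hnorm, hu]
    calc |lam| ^ k * (α * k * r ^ (α * k - 1)) / Real.Gamma (α * k + 1)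
        ≤ 2 / t * α * (((k : ℝ) + 1) * C ^ k) / Real.Gamma (α * k + 1) := hfin
      _ = 2 / t * α * (((k : ℝ) + 1) * C ^ k / Real.Gamma (α * k + 1)) := by ring
  have hg0 : Summable fun k => g k t := by
    apply Summable.of_norm_bounded (summable_aux hα hC0)
    intro k
    have hΓ := hΓpos k
    have htM : t ≤ M := by
      have : t ≤ 2 * t := by linarith
      exact le_trans this (le_max_left _ _)
    have h2 : t ^ (α * (k : ℝ)) ≤ (M ^ α) ^ k := by
      rw [← Real.rpow_natCast (M ^ α) k, ← Real.rpow_mul hM0]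
      exact Real.rpow_le_rpow ht.le htM (by positivity)
    have hnorm : ‖g k t‖ = |lam| ^ k * t ^ (α * k) / Real.Gamma (α * k + 1) := by
      simp only [hgdef, Real.norm_eq_abs, abs_div, abs_of_pos hΓ, abs_mul, abs_pow,
        abs_neg, abs_of_nonneg (Real.rpow_nonneg ht.le (α * (k:ℕ)))]
    have hineq : |lam| ^ k * t ^ (α * k) ≤ ((k : ℝ) + 1) * C ^ k := by
      have hCk : |lam| ^ k * t ^ (α * k) ≤ C ^ k := by
        rw [hC, mul_pow]
        exact mul_le_mul_of_nonneg_left h2 (by positivity)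
      have : (1 : ℝ) * C ^ k ≤ ((k : ℝ) + 1) * C ^ k :=
        mul_le_mul_of_nonneg_right (by push_cast; linarith [Nat.cast_nonneg (α := ℝ) k])
          (by positivity)
      linarith [hCk, this]
    rw [hnorm]
    gcongr
  have key : HasDerivAt (fun r => ∑' k, g k r) (∑' k, g' k t) t :=
    hasDerivAt_tsum_of_isPreconnected hu_sum hso hsc hg hg' htm hg0 htm
  have hg'sum : Summable fun k => g' k t :=
    Summable.of_norm_bounded hu_sum fun k => hg' k t htm
  have hML : (fun r => ML α 1 (-lam * r ^ α)) =ᶠ[nhds t] fun r => ∑' k, g k r := by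
    filter_upwards [hso.mem_nhds htm] with r hr
    have hr0 : 0 < r := hspos r hr
    unfold ML
    apply tsum_congr
    intro k
    simp only [hgdef]
    rw [mul_pow, ← Real.rpow_natCast (r ^ α) k, ← Real.rpow_mul hr0.le]
  rw [hML.deriv_eq, key.deriv]
  rw [Summable.tsum_eq_zero_add hg'sum]
  have h00 : g' 0 t = 0 := by simp [hg'def]
  rw [h00, zero_add]
  have hterm : ∀ k : ℕ,
      g' (k + 1) t = -lam * t ^ (α - 1) * ((-lam * t ^ α) ^ k /
        Real.Gamma (α * k + α)) := by
    intro k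
    have hx0 : (0 : ℝ) < α * ((k : ℝ) + 1) := by positivity
    simp only [hg'def]
    push_cast
    rw [Real.Gamma_add_one hx0.ne']
    have hpow : t ^ (α * ((k : ℝ) + 1) - 1) = t ^ (α - 1) * t ^ (α * k) := by
      rw [← Real.rpow_add ht]; ring_nf
    have hpk : (-lam * t ^ α) ^ k = (-lam) ^ k * t ^ (α * k) := by
      rw [mul_pow, ← Real.rpow_natCast (t ^ α) k, ← Real.rpow_mul ht.le]
    have hΓeq : α * ((k : ℝ) + 1) = α * k + α := by ring
    rw [hpow, hpk, hΓeq]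
    have hΓ : Real.Gamma (α * k + α) ≠ 0 :=
      (Real.Gamma_pos_of_pos (by positivity)).ne'
    have hx : (α * (k : ℝ) + α) ≠ 0 := by positivity
    field_simp
    ring
  calc ∑' k : ℕ, g' (k + 1) t
      = ∑' k : ℕ, -lam * t ^ (α - 1) *
          ((-lam * t ^ α) ^ k / Real.Gamma (α * k + α)) := tsum_congr hterm
    _ = -lam * t ^ (α - 1) *
          ∑' k : ℕ, (-lam * t ^ α) ^ k / Real.Gamma (α * k + α) := tsum_mul_left
    _ = -lam * t ^ (α - 1) * ML α α (-lam * t ^ α) := rfl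
end

section
/- Uniqueness via generalized Gronwall: if 0 < α < 1, λ ∈ ℝ, and u ∈ L²(0,T) satisfies u(t) = −(λ/Γ(α)) ∫₀ᵗ (t−s)^{α−1} u(s) ds for almost all t ∈ (0,T), then u = 0 almost everywhere on (0,T). -/
open MeasureTheory Real Set Filter Topology
open scoped ENNReal


lemma betaIntegrable (p q : ℝ) (hp : 0 < p) (hq : 0 < q) :
    IntervalIntegrable (fun x : ℝ => x ^ (p-1) * (1-x) ^ (q-1)) volume 0 1 := by
  have h := Complex.betaIntegral_convergent (u := (p:ℂ)) (v := (q:ℂ)) (by simpa) (by simpa)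
  have heq : EqOn (fun x : ℝ => ((x:ℂ) ^ ((p:ℂ) - 1) * (1-(x:ℂ)) ^ ((q:ℂ)-1)).re)
      (fun x : ℝ => x ^ (p-1) * (1-x) ^ (q-1)) (Icc 0 1) := by
    intro x hx
    have h1 : ((x:ℂ)) ^ ((p:ℂ) - 1) = ((x ^ (p-1) : ℝ) : ℂ) := by
      rw [Complex.ofReal_cpow hx.1]; push_cast; ring_nf
    have h2 : ((1-(x:ℂ))) ^ ((q:ℂ) - 1) = (((1-x) ^ (q-1) : ℝ) : ℂ) := by
      rw [show (1 - (x:ℂ)) = (((1:ℝ)-x : ℝ) : ℂ) by push_cast; ring,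
        Complex.ofReal_cpow (by linarith [hx.2])]; push_cast; ring_nf
    simp [h1, h2, ← Complex.ofReal_mul]
  constructor
  · have h1 : IntegrableOn (fun x : ℝ => ((x:ℂ) ^ ((p:ℂ) - 1) * (1-(x:ℂ)) ^ ((q:ℂ)-1)).re)
        (Ioc 0 1) volume := h.1.re
    exact IntegrableOn.congr_fun h1 (heq.mono Ioc_subset_Icc_self) measurableSet_Ioc
  · simp [IntegrableOn]

lemma betaValue (p q : ℝ) (hp : 0 < p) (hq : 0 < q) :
    ∫ x in (0:ℝ)..1, x ^ (p-1) * (1-x) ^ (q-1) = Gamma p * Gamma q / Gamma (p+q) := by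
  have h := Complex.Gamma_mul_Gamma_eq_betaIntegral (s := (p:ℂ)) (t := (q:ℂ)) (by simpa) (by simpa)
  have hB : Complex.betaIntegral p q = ((∫ x in (0:ℝ)..1, x ^ (p-1) * (1-x) ^ (q-1) : ℝ) : ℂ) := by
    rw [Complex.betaIntegral, ← intervalIntegral.integral_ofReal]
    apply intervalIntegral.integral_congr
    intro x hx
    rw [uIcc_of_le (by norm_num : (0:ℝ) ≤ 1)] at hx
    have h1 : ((x:ℂ)) ^ ((p:ℂ) - 1) = ((x ^ (p-1) : ℝ) : ℂ) := by
      rw [Complex.ofReal_cpow hx.1]; push_cast; ring_nf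
    have h2 : ((1-(x:ℂ))) ^ ((q:ℂ) - 1) = (((1-x) ^ (q-1) : ℝ) : ℂ) := by
      rw [show (1 - (x:ℂ)) = (((1:ℝ)-x : ℝ) : ℂ) by push_cast; ring,
        Complex.ofReal_cpow (by linarith [hx.2])]; push_cast; ring_nf
    simp [h1, h2, ← Complex.ofReal_mul]
  rw [hB] at h
  rw [show ((p:ℂ)+(q:ℂ)) = ((p+q : ℝ) : ℂ) by push_cast; ring] at h
  rw [Complex.Gamma_ofReal, Complex.Gamma_ofReal, Complex.Gamma_ofReal, ← Complex.ofReal_mul,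
    ← Complex.ofReal_mul] at h
  have := Complex.ofReal_injective h
  have hG : Gamma (p+q) ≠ 0 := (Real.Gamma_pos_of_pos (by linarith)).ne'
  field_simp
  linarith [this]

lemma phi_eq {p q r t : ℝ} (hrt : r < t) :
    EqOn (fun x : ℝ => (t - ((t-r)*x+r)) ^ (p-1) * (((t-r)*x+r) - r) ^ (q-1))
      (fun x : ℝ => ((t-r) ^ (p-1) * (t-r) ^ (q-1)) * (x ^ (q-1) * (1-x) ^ (p-1)))
      (Icc 0 1) := by
  intro x hx
  have hc : (0:ℝ) ≤ t - r := by linarith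
  have e1 : t - ((t-r)*x+r) = (t-r) * (1-x) := by ring
  have e2 : ((t-r)*x+r) - r = (t-r) * x := by ring
  simp only [e1, e2, Real.mul_rpow hc (by linarith [hx.2] : (0:ℝ) ≤ 1 - x),
    Real.mul_rpow hc hx.1]
  ring

lemma conv_integrable {p q r t : ℝ} (hp : 0 < p) (hq : 0 < q) (hrt : r < t) :
    IntervalIntegrable (fun s : ℝ => (t-s) ^ (p-1) * (s-r) ^ (q-1)) volume r t := by
  set c := t - r with hc
  have hc0 : 0 < c := by simp [hc]; linarith
  have hφ : IntervalIntegrable (fun x : ℝ => (t - (c*x+r)) ^ (p-1) * ((c*x+r) - r) ^ (q-1))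
      volume 0 1 := by
    have hb := ((betaIntegrable q p hq hp).const_mul (c ^ (p-1) * c ^ (q-1)))
    constructor
    · exact IntegrableOn.congr_fun hb.1 (fun x hx => (phi_eq hrt (Ioc_subset_Icc_self hx)).symm)
        measurableSet_Ioc
    · simp [IntegrableOn]
  have h1 := (hφ.comp_mul_left (c := c⁻¹))
  have h2 := h1.comp_add_right (-r)
  have h3 : (fun x : ℝ => (t - (c * (c⁻¹ * (x + -r)) + r)) ^ (p-1) * ((c * (c⁻¹ * (x + -r)) + r) - r) ^ (q-1))
      = fun s : ℝ => (t-s) ^ (p-1) * (s-r) ^ (q-1) := by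
    funext s
    have : c * (c⁻¹ * (s + -r)) + r = s := by field_simp; ring
    rw [this]
  rw [h3] at h2
  have e0 : 0 / c⁻¹ - -r = r := by field_simp; ring
  have e1 : 1 / c⁻¹ - -r = t := by field_simp; linarith
  rwa [e0, e1] at h2

lemma conv_integral {p q r t : ℝ} (hp : 0 < p) (hq : 0 < q) (hrt : r < t) :
    ∫ s in r..t, (t-s) ^ (p-1) * (s-r) ^ (q-1)
      = (t-r) ^ (p+q-1) * (Gamma p * Gamma q / Gamma (p+q)) := by
  set c := t - r with hc
  have hc0 : 0 < c := by simp [hc]; linarith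
  have key := intervalIntegral.integral_comp_mul_add
    (f := fun s : ℝ => (t-s) ^ (p-1) * (s-r) ^ (q-1)) (a := 0) (b := 1) hc0.ne' r
  rw [mul_zero, zero_add, mul_one] at key
  have hct : c + r = t := by simp [hc]
  rw [hct] at key
  have hval : ∫ x in (0:ℝ)..1, (t - (c*x+r)) ^ (p-1) * ((c*x+r) - r) ^ (q-1)
      = (c ^ (p-1) * c ^ (q-1)) * (Gamma q * Gamma p / Gamma (q+p)) := by
    rw [intervalIntegral.integral_congr
        (by rw [uIcc_of_le (by norm_num : (0:ℝ) ≤ 1)]; exact phi_eq hrt),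
      intervalIntegral.integral_const_mul, betaValue q p hq hp]
  rw [hval] at key
  have hint : c * ((c ^ (p-1) * c ^ (q-1)) * (Gamma q * Gamma p / Gamma (q+p)))
      = ∫ s in r..t, (t-s) ^ (p-1) * (s-r) ^ (q-1) := by
    rw [key, smul_eq_mul]; field_simp
  rw [← hint]
  have hcc : c * (c ^ (p-1) * c ^ (q-1)) = c ^ (p+q-1) := by
    rw [← Real.rpow_add hc0, mul_comm, ← Real.rpow_add_one hc0.ne']
    congr 1; ring
  rw [show c * ((c ^ (p-1) * c ^ (q-1)) * (Gamma q * Gamma p / Gamma (q+p)))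
      = (c * (c ^ (p-1) * c ^ (q-1))) * (Gamma q * Gamma p / Gamma (q+p)) by ring, hcc,
    add_comm q p, mul_comm (Gamma q) (Gamma p)]

lemma conv_lint {p q r t : ℝ} (hp : 0 < p) (hq : 0 < q) (hrt : r < t) :
    ∫⁻ s in Ioo r t, ENNReal.ofReal ((t-s) ^ (p-1) * (s-r) ^ (q-1))
      = ENNReal.ofReal ((t-r) ^ (p+q-1) * (Gamma p * Gamma q / Gamma (p+q))) := by
  have hint : Integrable (fun s : ℝ => (t-s) ^ (p-1) * (s-r) ^ (q-1))
      (volume.restrict (Ioo r t)) := ((conv_integrable hp hq hrt).1).mono_set Ioo_subset_Ioc_self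
  have hnn : 0 ≤ᵐ[volume.restrict (Ioo r t)]
      (fun s : ℝ => (t-s) ^ (p-1) * (s-r) ^ (q-1)) := by
    rw [EventuallyLE, ae_restrict_iff' measurableSet_Ioo]
    filter_upwards with s hs
    exact mul_nonneg (Real.rpow_nonneg (by linarith [hs.2]) _)
      (Real.rpow_nonneg (by linarith [hs.1]) _)
  rw [← ofReal_integral_eq_lintegral_ofReal hint hnn]
  congr 1
  rw [← integral_Ioc_eq_integral_Ioo, ← intervalIntegral.integral_of_le hrt.le,
    conv_integral hp hq hrt]

lemma swap_lemma (t : ℝ) (G : ℝ → ℝ → ℝ≥0∞)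
    (hG : Measurable (fun p : ℝ × ℝ => G p.1 p.2)) :
    ∫⁻ s in Ioo 0 t, ∫⁻ r in Ioo 0 s, G s r
      = ∫⁻ r in Ioo 0 t, ∫⁻ s in Ioo r t, G s r := by
  set H : ℝ → ℝ → ℝ≥0∞ := fun s r => if 0 < r ∧ r < s ∧ s < t then G s r else 0 with hH
  have hAmeas : MeasurableSet {p : ℝ × ℝ | 0 < p.2 ∧ p.2 < p.1 ∧ p.1 < t} := by
    apply MeasurableSet.inter
    · exact measurableSet_lt measurable_const measurable_snd
    exact (measurableSet_lt measurable_snd measurable_fst).inter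
      (measurableSet_lt measurable_fst measurable_const)
  have hHmeas : AEMeasurable (Function.uncurry H) ((volume : Measure ℝ).prod volume) := by
    have : Function.uncurry H = fun p : ℝ × ℝ =>
        if 0 < p.2 ∧ p.2 < p.1 ∧ p.1 < t then G p.1 p.2 else 0 := rfl
    rw [this]
    exact (Measurable.ite hAmeas hG measurable_const).aemeasurable
  have L : ∫⁻ s in Ioo 0 t, ∫⁻ r in Ioo 0 s, G s r = ∫⁻ s, ∫⁻ r, H s r := by
    rw [← lintegral_indicator measurableSet_Ioo]
    apply lintegral_congr
    intro s
    rw [Set.indicator_apply]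
    split_ifs with hs
    · rw [← lintegral_indicator measurableSet_Ioo]
      apply lintegral_congr
      intro r
      rw [Set.indicator_apply, hH]
      simp only [mem_Ioo]
      split_ifs with h1 h2 h2
      · rfl
      · exact absurd ⟨h1.1, h1.2, (mem_Ioo.mp hs).2⟩ h2
      · exact absurd ⟨h2.1, h2.2.1⟩ h1
      · rfl
    · symm
      have : ∀ r, H s r = 0 := by
        intro r; rw [hH]; simp only []
        split_ifs with h1
        · exact absurd (mem_Ioo.mpr ⟨lt_trans h1.1 h1.2.1, h1.2.2⟩) hs
        · rfl
      simp [this]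
  have R : ∫⁻ r in Ioo 0 t, ∫⁻ s in Ioo r t, G s r = ∫⁻ r, ∫⁻ s, H s r := by
    rw [← lintegral_indicator measurableSet_Ioo]
    apply lintegral_congr
    intro r
    rw [Set.indicator_apply]
    split_ifs with hr
    · rw [← lintegral_indicator measurableSet_Ioo]
      apply lintegral_congr
      intro s
      rw [Set.indicator_apply, hH]
      simp only [mem_Ioo]
      split_ifs with h1 h2 h2
      · rfl
      · exact absurd ⟨(mem_Ioo.mp hr).1, h1.1, h1.2⟩ h2
      · exact absurd ⟨h2.2.1, h2.2.2⟩ h1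
      · rfl
    · symm
      have : ∀ s, H s r = 0 := by
        intro s; rw [hH]; simp only []
        split_ifs with h1
        · exact absurd (mem_Ioo.mpr ⟨h1.1, lt_trans h1.2.1 h1.2.2⟩) hr
        · rfl
      simp [this]
  rw [L, R]
  exact lintegral_lintegral_swap hHmeas

lemma gronwall_core (T α C : ℝ) (hT : 0 < T) (hα : 0 < α) (hC : 0 ≤ C)
    (V : ℝ → ℝ≥0∞) (hV : Measurable V)
    (hbase : ∀ᵐ t ∂(volume : Measure ℝ), t ∈ Ioo 0 T →
      V t ≤ ENNReal.ofReal C * ∫⁻ s in Ioo 0 t, ENNReal.ofReal ((t-s) ^ (α-1)) * V s)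
    (n : ℕ) :
    ∀ᵐ t ∂(volume : Measure ℝ), t ∈ Ioo 0 T →
      V t ≤ ENNReal.ofReal (C^(n+1) * Gamma α ^ (n+1) / Gamma (((n:ℝ)+1)*α)) *
        ∫⁻ s in Ioo 0 t, ENNReal.ofReal ((t-s) ^ (((n:ℝ)+1)*α-1)) * V s := by
  have hGα : Gamma α ≠ 0 := (Real.Gamma_pos_of_pos hα).ne'
  induction n with
  | zero =>
    simp only [Nat.cast_zero, zero_add, one_mul, pow_one]
    rw [mul_div_assoc, div_self hGα, mul_one]
    exact hbase
  | succ n IH =>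
    set β : ℝ := ((n:ℝ)+1)*α with hβ
    have hβ0 : 0 < β := by positivity
    set cn : ℝ := C^(n+1) * Gamma α ^ (n+1) / Gamma β with hcn
    have hcn0 : 0 ≤ cn := by
      apply div_nonneg (by positivity) (Real.Gamma_pos_of_pos hβ0).le
    set Bc : ℝ := Gamma α * Gamma β / Gamma (α + β) with hBc
    have hBc0 : 0 ≤ Bc := by
      apply div_nonneg ?_ (Real.Gamma_pos_of_pos (by positivity)).le
      exact mul_nonneg (Real.Gamma_pos_of_pos hα).le (Real.Gamma_pos_of_pos hβ0).le
    filter_upwards [hbase] with t hbt ht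
    have step1 : V t ≤ ENNReal.ofReal C *
        ∫⁻ s in Ioo 0 t, ENNReal.ofReal ((t-s) ^ (α-1)) * V s := hbt ht
    -- bound V s inside using IH
    have hae : ∀ᵐ s ∂(volume.restrict (Ioo 0 t)),
        ENNReal.ofReal ((t-s) ^ (α-1)) * V s ≤ ENNReal.ofReal ((t-s) ^ (α-1)) *
          (ENNReal.ofReal cn * ∫⁻ r in Ioo 0 s, ENNReal.ofReal ((s-r) ^ (β-1)) * V r) := by
      filter_upwards [ae_restrict_mem measurableSet_Ioo, ae_restrict_of_ae IH] with s hs hIH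
      exact mul_le_mul_right (hIH ⟨hs.1, hs.2.trans ht.2⟩) _
    have step2 : V t ≤ ENNReal.ofReal C * ENNReal.ofReal cn *
        ∫⁻ s in Ioo 0 t, ∫⁻ r in Ioo 0 s,
          (ENNReal.ofReal ((t-s) ^ (α-1)) * ENNReal.ofReal ((s-r) ^ (β-1))) * V r := by
      refine step1.trans ?_
      calc ENNReal.ofReal C * ∫⁻ s in Ioo 0 t, ENNReal.ofReal ((t-s) ^ (α-1)) * V s
          ≤ ENNReal.ofReal C * ∫⁻ s in Ioo 0 t, ENNReal.ofReal ((t-s) ^ (α-1)) *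
            (ENNReal.ofReal cn * ∫⁻ r in Ioo 0 s, ENNReal.ofReal ((s-r) ^ (β-1)) * V r) :=
            mul_le_mul_right (lintegral_mono_ae hae) _
        _ = ENNReal.ofReal C * ENNReal.ofReal cn *
            ∫⁻ s in Ioo 0 t, ∫⁻ r in Ioo 0 s,
              (ENNReal.ofReal ((t-s) ^ (α-1)) * ENNReal.ofReal ((s-r) ^ (β-1))) * V r := by
            rw [mul_assoc (ENNReal.ofReal C)]
            congr 1
            rw [← lintegral_const_mul' _ _ ENNReal.ofReal_ne_top]
            apply lintegral_congr
            intro s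
            have : (∫⁻ r in Ioo 0 s,
                (ENNReal.ofReal ((t-s) ^ (α-1)) * ENNReal.ofReal ((s-r) ^ (β-1))) * V r)
                = ENNReal.ofReal ((t-s) ^ (α-1)) *
                  ∫⁻ r in Ioo 0 s, ENNReal.ofReal ((s-r) ^ (β-1)) * V r := by
              rw [← lintegral_const_mul' _ _ ENNReal.ofReal_ne_top]
              exact lintegral_congr fun r => by ring
            rw [this]; ring
    -- swap
    have hker : Measurable (fun p : ℝ × ℝ =>
        (ENNReal.ofReal ((t-p.1) ^ (α-1)) * ENNReal.ofReal ((p.1-p.2) ^ (β-1))) * V p.2) := by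
      apply Measurable.mul
      · apply Measurable.mul (f := fun p : ℝ × ℝ => ENNReal.ofReal ((t-p.1) ^ (α-1)))
          (g := fun p : ℝ × ℝ => ENNReal.ofReal ((p.1-p.2) ^ (β-1)))
        · exact ENNReal.measurable_ofReal.comp
            ((measurable_const.sub measurable_fst).pow_const _)
        · exact ENNReal.measurable_ofReal.comp
            ((measurable_fst.sub measurable_snd).pow_const _)
      · exact hV.comp measurable_snd
    have hswap := swap_lemma t (fun s r =>
      (ENNReal.ofReal ((t-s) ^ (α-1)) * ENNReal.ofReal ((s-r) ^ (β-1))) * V r) hker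
    rw [hswap] at step2
    -- compute inner integral
    have hinner : ∀ r ∈ Ioo (0:ℝ) t,
        (∫⁻ s in Ioo r t,
          (ENNReal.ofReal ((t-s) ^ (α-1)) * ENNReal.ofReal ((s-r) ^ (β-1))) * V r)
        = (ENNReal.ofReal Bc * ENNReal.ofReal ((t-r) ^ (((n:ℝ)+2)*α-1))) * V r := by
      intro r hr
      have hmeas : Measurable (fun s : ℝ =>
          ENNReal.ofReal ((t-s) ^ (α-1)) * ENNReal.ofReal ((s-r) ^ (β-1))) := by
        apply Measurable.mul (f := fun s : ℝ => ENNReal.ofReal ((t-s) ^ (α-1)))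
          (g := fun s : ℝ => ENNReal.ofReal ((s-r) ^ (β-1)))
        · exact ENNReal.measurable_ofReal.comp
            ((measurable_const.sub measurable_id).pow_const _)
        · exact ENNReal.measurable_ofReal.comp
            ((measurable_id.sub measurable_const).pow_const _)
      rw [lintegral_mul_const _ hmeas]
      congr 1
      have hcongr : ∫⁻ s in Ioo r t,
          ENNReal.ofReal ((t-s) ^ (α-1)) * ENNReal.ofReal ((s-r) ^ (β-1))
          = ∫⁻ s in Ioo r t, ENNReal.ofReal ((t-s) ^ (α-1) * (s-r) ^ (β-1)) := by
        apply setLIntegral_congr_fun measurableSet_Ioo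
        intro s hs; dsimp only
        rw [ENNReal.ofReal_mul (Real.rpow_nonneg (by linarith [hs.2]) _)]
      rw [hcongr, conv_lint hα hβ0 hr.2]
      rw [show α + β - 1 = ((n:ℝ)+2)*α - 1 by rw [hβ]; ring]
      rw [ENNReal.ofReal_mul (Real.rpow_nonneg (by linarith [hr.2, hr.1]) _)]
      rw [hBc]
      ring
    have step3 : V t ≤ ENNReal.ofReal C * ENNReal.ofReal cn * ENNReal.ofReal Bc *
        ∫⁻ r in Ioo 0 t, ENNReal.ofReal ((t-r) ^ (((n:ℝ)+2)*α-1)) * V r := by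
      refine step2.trans ?_
      rw [setLIntegral_congr_fun measurableSet_Ioo
        hinner]
      rw [mul_assoc (ENNReal.ofReal C * ENNReal.ofReal cn)]
      apply mul_le_mul_right
      rw [← lintegral_const_mul' _ _ ENNReal.ofReal_ne_top]
      apply le_of_eq
      apply lintegral_congr
      intro r
      ring
    refine step3.trans (le_of_eq ?_)
    push_cast
    rw [show ((n:ℝ)+1+1)*α - 1 = ((n:ℝ)+2)*α-1 from by ring]
    congr 1
    · rw [← ENNReal.ofReal_mul hC, ← ENNReal.ofReal_mul (mul_nonneg hC hcn0)]
      congr 1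
      rw [hcn, hBc, hβ]
      have h1 : Gamma (((n:ℝ)+1)*α) ≠ 0 := (Real.Gamma_pos_of_pos hβ0).ne'
      have h2 : Gamma (α + ((n:ℝ)+1)*α) ≠ 0 :=
        (Real.Gamma_pos_of_pos (by positivity)).ne'
      have h3 : α + ((n:ℝ)+1)*α = ((n:ℝ)+2)*α := by ring
      rw [h3] at h2 ⊢
      push_cast
      field_simp
      ring

lemma ofReal_setIntegral_le {f : ℝ → ℝ} {s : Set ℝ}
    (hnn : 0 ≤ᵐ[volume.restrict s] f) :
    ENNReal.ofReal (∫ x in s, f x) ≤ ∫⁻ x in s, ENNReal.ofReal (f x) := by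
  by_cases h : Integrable f (volume.restrict s)
  · exact le_of_eq (ofReal_integral_eq_lintegral_ofReal h hnn)
  · rw [integral_undef h]; simp

lemma tendsto_rho_gamma (ρ α : ℝ) (hρ : 0 ≤ ρ) (hα : 0 < α) :
    Tendsto (fun n : ℕ => ρ ^ n / Gamma ((n:ℝ)*α)) atTop (𝓝 0) := by
  set σ : ℝ := max 1 ρ with hσ
  have hσ1 : 1 ≤ σ := le_max_left _ _
  set k : ℕ := ⌈2/α⌉₊ with hk
  have hkk : 2/α ≤ (k:ℝ) := Nat.le_ceil _
  set τ : ℝ := σ ^ k with hτ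
  have hτ1 : 1 ≤ τ := one_le_pow₀ hσ1
  have hna : Tendsto (fun n : ℕ => (n:ℝ)*α) atTop atTop :=
    Tendsto.atTop_mul_const hα tendsto_natCast_atTop_atTop
  have hm : Tendsto (fun n : ℕ => ⌊(n:ℝ)*α⌋₊ - 1) atTop atTop :=
    (tendsto_sub_atTop_nat 1).comp (tendsto_nat_floor_atTop.comp hna)
  have hφ : Tendsto (fun j : ℕ => τ * (τ ^ j / j.factorial)) atTop (𝓝 0) := by
    have := (FloorSemiring.tendsto_pow_div_factorial_atTop τ).const_mul τ
    simpa using this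
  have hg : Tendsto (fun n : ℕ => τ * (τ ^ (⌊(n:ℝ)*α⌋₊ - 1) / (⌊(n:ℝ)*α⌋₊ - 1).factorial))
      atTop (𝓝 0) := hφ.comp hm
  apply squeeze_zero' ?_ ?_ hg
  · filter_upwards [hna.eventually_ge_atTop 2] with n hn2
    have : 0 < Gamma ((n:ℝ)*α) := Real.Gamma_pos_of_pos (by linarith)
    positivity
  · filter_upwards [hna.eventually_ge_atTop 2] with n hn2
    set m : ℕ := ⌊(n:ℝ)*α⌋₊ with hm'
    have hm2 : 2 ≤ m := Nat.le_floor (by exact_mod_cast hn2)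
    have hm2' : (2:ℝ) ≤ (m:ℝ) := by exact_mod_cast hm2
    have hfloor_le : (m:ℝ) ≤ (n:ℝ)*α := Nat.floor_le (by positivity)
    -- Gamma ((n:ℝ)*α) ≥ Gamma m = (m-1)!
    have hmono : Gamma ((m:ℝ)) ≤ Gamma ((n:ℝ)*α) := by
      rcases eq_or_lt_of_le hfloor_le with h | h
      · rw [h]
      · exact (Real.Gamma_strictMonoOn_Ici (mem_Ici.mpr hm2')
          (mem_Ici.mpr (by linarith)) h).le
    have hfact : Gamma ((m:ℝ)) = ((m-1).factorial: ℝ) := by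
      have : (m:ℝ) = ((m-1:ℕ):ℝ) + 1 := by
        rw [Nat.cast_sub (by omega)]; push_cast; ring
      rw [this, Real.Gamma_nat_eq_factorial]
    -- ρ^n ≤ τ^m
    have hnm : n ≤ k * m := by
      have h1 : ((n:ℝ)) ≤ (k:ℝ) * (m:ℝ) := by
        have hmge : ((n:ℝ)*α)/2 ≤ (m:ℝ) := by
          have := Nat.lt_floor_add_one ((n:ℝ)*α)
          nlinarith
        have e : (2/α) * ((n:ℝ)*α/2) = (n:ℝ) := by field_simp
        have h2 := mul_le_mul hkk hmge (by positivity) (Nat.cast_nonneg k)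
        linarith [e ▸ h2]
      exact_mod_cast h1
    have hpow : ρ ^ n ≤ τ ^ m := by
      calc ρ ^ n ≤ σ ^ n := pow_le_pow_left₀ hρ (le_max_right _ _) n
        _ ≤ σ ^ (k*m) := pow_le_pow_right₀ hσ1 hnm
        _ = τ ^ m := by rw [hτ, ← pow_mul]
    have hτm : τ ^ m = τ * τ ^ (m-1) := by
      conv_lhs => rw [show m = 1 + (m-1) by omega, pow_add, pow_one]
    have hΓpos : (0:ℝ) < ((m-1).factorial : ℝ) := by exact_mod_cast Nat.factorial_pos _
    calc ρ ^ n / Gamma ((n:ℝ)*α) ≤ τ ^ m / ((m-1).factorial : ℝ) := by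
          apply div_le_div₀ (by positivity) hpow hΓpos
          rw [← hfact]; exact hmono
      _ = τ * (τ ^ (m-1) / ((m-1).factorial : ℝ)) := by rw [hτm]; ring

set_option maxHeartbeats 1000000 in
theorem uniqueness_via_generalized_Gronwall
    (T α lam : ℝ) (hT : 0 < T) (hα : 0 < α) (hα1 : α < 1)
    (u : ℝ → ℝ) (hu : MemLp u 2 (volume.restrict (Set.Ioo 0 T)))
    (heq : ∀ᵐ t ∂(volume.restrict (Set.Ioo 0 T)),
      u t = -(lam / Real.Gamma α) * ∫ s in (0:ℝ)..t, (t - s) ^ (α - 1) * u s) :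
    ∀ᵐ t ∂(volume.restrict (Set.Ioo 0 T)), u t = 0 := by
  have hGpos : 0 < Gamma α := Real.Gamma_pos_of_pos hα
  set C : ℝ := |lam| / Gamma α with hCdef
  have hC : 0 ≤ C := div_nonneg (abs_nonneg _) hGpos.le
  -- measurable representative
  obtain ⟨g, hgsm, hug⟩ := hu.aestronglyMeasurable
  have hug' : ∀ᵐ s ∂(volume : Measure ℝ), s ∈ Ioo 0 T → u s = g s :=
    (ae_restrict_iff' measurableSet_Ioo).mp hug
  have heq' : ∀ᵐ t ∂(volume : Measure ℝ), t ∈ Ioo 0 T →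
      u t = -(lam / Gamma α) * ∫ s in (0:ℝ)..t, (t - s) ^ (α - 1) * u s :=
    (ae_restrict_iff' measurableSet_Ioo).mp heq
  set V : ℝ → ℝ≥0∞ := fun s => ENNReal.ofReal |g s| with hVdef
  have hV : Measurable V := ENNReal.measurable_ofReal.comp hgsm.measurable.abs
  -- base inequality
  have hbase : ∀ᵐ t ∂(volume : Measure ℝ), t ∈ Ioo 0 T →
      V t ≤ ENNReal.ofReal C * ∫⁻ s in Ioo 0 t, ENNReal.ofReal ((t-s) ^ (α-1)) * V s := by
    filter_upwards [heq', hug'] with t het hgt ht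
    have hut : |u t| ≤ C * ∫ s in (0:ℝ)..t, (t-s) ^ (α-1) * |g s| := by
      rw [het ht, abs_mul]
      have h1 : |(-(lam / Gamma α))| = C := by
        rw [abs_neg, abs_div, abs_of_pos hGpos]
      rw [h1]
      apply mul_le_mul_of_nonneg_left ?_ hC
      calc |∫ s in (0:ℝ)..t, (t-s) ^ (α-1) * u s|
          ≤ ∫ s in (0:ℝ)..t, |(t-s) ^ (α-1) * u s| :=
            intervalIntegral.abs_integral_le_integral_abs ht.1.le
        _ = ∫ s in (0:ℝ)..t, (t-s) ^ (α-1) * |g s| := by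
            apply intervalIntegral.integral_congr_ae
            filter_upwards [hug'] with s hgs hs
            rw [uIoc_of_le ht.1.le] at hs
            have hsT : s ∈ Ioo 0 T := ⟨hs.1, lt_of_le_of_lt hs.2 ht.2⟩
            rw [hgs hsT, abs_mul, abs_of_nonneg (Real.rpow_nonneg (by linarith [hs.2]) _)]
    have step : ENNReal.ofReal (∫ s in (0:ℝ)..t, (t-s) ^ (α-1) * |g s|)
        ≤ ∫⁻ s in Ioo 0 t, ENNReal.ofReal ((t-s) ^ (α-1)) * V s := by
      rw [intervalIntegral.integral_of_le ht.1.le, integral_Ioc_eq_integral_Ioo]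
      refine (ofReal_setIntegral_le ?_).trans (le_of_eq ?_)
      · rw [EventuallyLE, ae_restrict_iff' measurableSet_Ioo]
        filter_upwards with s hs
        exact mul_nonneg (Real.rpow_nonneg (by linarith [hs.2]) _) (abs_nonneg _)
      · apply setLIntegral_congr_fun measurableSet_Ioo
        intro s hs; dsimp only
        rw [ENNReal.ofReal_mul (Real.rpow_nonneg (by linarith [hs.2]) _)]
    calc V t = ENNReal.ofReal |u t| := by rw [hVdef]; simp [hgt ht]
      _ ≤ ENNReal.ofReal (C * ∫ s in (0:ℝ)..t, (t-s) ^ (α-1) * |g s|) :=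
          ENNReal.ofReal_le_ofReal hut
      _ = ENNReal.ofReal C * ENNReal.ofReal (∫ s in (0:ℝ)..t, (t-s) ^ (α-1) * |g s|) :=
          ENNReal.ofReal_mul hC
      _ ≤ _ := mul_le_mul_right step _
  -- finiteness of I
  haveI : IsFiniteMeasure (volume.restrict (Ioo (0:ℝ) T)) := by
    constructor
    rw [Measure.restrict_apply_univ, Real.volume_Ioo]
    exact ENNReal.ofReal_lt_top
  have hint : Integrable u (volume.restrict (Ioo 0 T)) := hu.integrable one_le_two
  set I : ℝ≥0∞ := ∫⁻ s in Ioo (0:ℝ) T, V s with hIdef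
  have hIfin : I ≠ ⊤ := by
    have h1 : I = ∫⁻ s in Ioo (0:ℝ) T, ‖u s‖₊ := by
      apply lintegral_congr_ae
      filter_upwards [hug] with s hs
      rw [hVdef]
      simp only [← hs, ← enorm_eq_nnnorm, ← ofReal_norm, Real.norm_eq_abs]
    rw [h1]
    exact hint.2.ne
  -- choose n
  set ρ : ℝ := C * Gamma α * T ^ α with hρdef
  have hρ0 : 0 ≤ ρ := by positivity
  have htend := (tendsto_rho_gamma ρ α hρ0 hα).comp (tendsto_add_atTop_nat 1)
  have hev1 : ∀ᶠ n : ℕ in atTop, ρ ^ (n+1) / Gamma (((n:ℝ)+1)*α) < 1 := by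
    filter_upwards [htend.eventually_lt_const (by norm_num : (0:ℝ) < 1)] with n hn
    simp only [Function.comp_apply] at hn
    have hc : ((n:ℝ)+1) = (((n+1:ℕ)):ℝ) := by push_cast; ring
    rw [hc]
    exact hn
  have hev2 : ∀ᶠ n : ℕ in atTop, 1 ≤ ((n:ℝ)+1)*α := by
    have h2 : Tendsto (fun n : ℕ => ((n:ℝ)+1)*α) atTop atTop :=
      (tendsto_atTop_add_const_right atTop 1 tendsto_natCast_atTop_atTop).atTop_mul_const hα
    exact h2.eventually_ge_atTop 1
  obtain ⟨n, hδ1, hγ1⟩ := (hev1.and hev2).exists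
  set γ : ℝ := ((n:ℝ)+1)*α - 1 with hγdef
  have hγ0 : 0 ≤ γ := by simp [hγdef]; linarith
  set cn : ℝ := C^(n+1) * Gamma α ^ (n+1) / Gamma (((n:ℝ)+1)*α) with hcndef
  have hΓn : 0 < Gamma (((n:ℝ)+1)*α) := Real.Gamma_pos_of_pos (by positivity)
  have hcn0 : 0 ≤ cn := div_nonneg (by positivity) hΓn.le
  have hclaim := gronwall_core T α C hT hα hC V hV hbase n
  -- pointwise bound by constant * I
  have hbound : ∀ᵐ t ∂(volume : Measure ℝ), t ∈ Ioo 0 T →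
      V t ≤ ENNReal.ofReal (cn * T ^ γ) * I := by
    filter_upwards [hclaim] with t hct ht
    refine (hct ht).trans ?_
    rw [ENNReal.ofReal_mul hcn0]
    rw [mul_assoc]
    apply mul_le_mul_right
    calc ∫⁻ s in Ioo 0 t, ENNReal.ofReal ((t-s) ^ (((n:ℝ)+1)*α-1)) * V s
        ≤ ∫⁻ s in Ioo 0 t, ENNReal.ofReal (T ^ γ) * V s := by
          apply lintegral_mono_ae
          filter_upwards [ae_restrict_mem measurableSet_Ioo] with s hs
          apply mul_le_mul_left
          apply ENNReal.ofReal_le_ofReal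
          rw [hγdef]
          exact Real.rpow_le_rpow (by linarith [hs.2]) (by linarith [hs.1, hs.2, ht.2]) hγ0
      _ ≤ ENNReal.ofReal (T ^ γ) * I := by
          rw [lintegral_const_mul' _ _ ENNReal.ofReal_ne_top]
          exact mul_le_mul_right (lintegral_mono_set (Ioo_subset_Ioo le_rfl ht.2.le)) _
  -- integrate
  have hII : I ≤ ENNReal.ofReal (ρ ^ (n+1) / Gamma (((n:ℝ)+1)*α)) * I := by
    have h1 : I ≤ ∫⁻ _t in Ioo (0:ℝ) T, ENNReal.ofReal (cn * T ^ γ) * I := by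
      apply lintegral_mono_ae
      rw [ae_restrict_iff' measurableSet_Ioo]
      exact hbound
    have h2 : ∫⁻ _t in Ioo (0:ℝ) T, ENNReal.ofReal (cn * T ^ γ) * I
        = ENNReal.ofReal (cn * T ^ γ) * I * ENNReal.ofReal T := by
      rw [setLIntegral_const, Real.volume_Ioo, sub_zero]
    have h3 : ENNReal.ofReal (cn * T ^ γ) * I * ENNReal.ofReal T
        = ENNReal.ofReal (ρ ^ (n+1) / Gamma (((n:ℝ)+1)*α)) * I := by
      rw [show ENNReal.ofReal (cn * T ^ γ) * I * ENNReal.ofReal T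
          = (ENNReal.ofReal (cn * T ^ γ) * ENNReal.ofReal T) * I by ring,
        ← ENNReal.ofReal_mul (by positivity)]
      congr 2
      rw [hcndef, hρdef]
      have hTγ : T ^ γ * T = T ^ (((n:ℝ)+1)*α) := by
        rw [hγdef, ← Real.rpow_add_one hT.ne' (((n:ℝ)+1)*α - 1)]
        congr 1; ring
      have hTpow : T ^ (((n:ℝ)+1)*α) = (T ^ α) ^ (n+1) := by
        rw [show ((n:ℝ)+1)*α = α * (((n+1:ℕ)):ℝ) by push_cast; ring,
          Real.rpow_mul hT.le, Real.rpow_natCast]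
      rw [mul_assoc, hTγ, div_mul_eq_mul_div, hTpow]
      congr 1
      rw [mul_pow, mul_pow]
    calc I ≤ ∫⁻ _t in Ioo (0:ℝ) T, ENNReal.ofReal (cn * T ^ γ) * I := h1
      _ = ENNReal.ofReal (ρ ^ (n+1) / Gamma (((n:ℝ)+1)*α)) * I := h2.trans h3
  -- conclude I = 0
  have hI0 : I = 0 := by
    by_contra h0
    have hlt : ENNReal.ofReal (ρ ^ (n+1) / Gamma (((n:ℝ)+1)*α)) < 1 :=
      ENNReal.ofReal_lt_one.mpr hδ1
    have : ENNReal.ofReal (ρ ^ (n+1) / Gamma (((n:ℝ)+1)*α)) * I < 1 * I :=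
      (ENNReal.mul_lt_mul_iff_left h0 hIfin).mpr hlt
    rw [one_mul] at this
    exact absurd (hII.trans_lt this) (lt_irrefl I)
  -- V = 0 a.e.
  have hV0 : ∀ᵐ s ∂(volume.restrict (Ioo (0:ℝ) T)), V s = 0 := by
    have := (lintegral_eq_zero_iff hV).mp hI0
    filter_upwards [this] with s hs
    exact hs
  filter_upwards [hV0, hug] with s hVs hus
  have : |g s| = 0 := by
    rw [hVdef] at hVs
    simpa [ENNReal.ofReal_eq_zero, abs_nonneg, le_antisymm_iff] using
      le_antisymm (ENNReal.ofReal_eq_zero.mp hVs) (abs_nonneg _)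
  rw [hus]
  exact abs_eq_zero.mp this
end

section
/- Fractional integral of the shifted Mittag-Leffler kernel: for 0 < α < 1, λ ∈ ℝ, λ ≠ 0, 0 < t₀ < T, and u(t) := 0 for t ≤ t₀, u(t) := (t−t₀)^{α−1} E_{α,α}(−λ(t−t₀)^α) for t > t₀, one has −λ (J^α u)(t) = (t−t₀)^{α−1} E_{α,α}(−λ(t−t₀)^α) − (t−t₀)^{α−1}/Γ(α) for t > t₀, and (J^α u)(t) = 0 for t ≤ t₀. -/
open MeasureTheory Real Set Filter

lemma gamma_ratio {α : ℝ} (hα : 0 < α) (hα1 : α < 1) {x : ℝ} (hx : 0 < x) :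
    x * Real.Gamma x ≤ Real.Gamma (x + α) * (x + α) ^ (1 - α) := by
  have h := Real.Gamma_mul_add_mul_le_rpow_Gamma_mul_rpow_Gamma
    (s := x + α) (t := x + α + 1) (a := α) (b := 1 - α)
    (by linarith) (by linarith) hα (by linarith) (by ring)
  have e1 : α * (x + α) + (1 - α) * (x + α + 1) = x + 1 := by ring
  rw [e1, Real.Gamma_add_one hx.ne', Real.Gamma_add_one (by positivity : (x+α) ≠ 0)] at h
  have hG : 0 < Real.Gamma (x + α) := Real.Gamma_pos_of_pos (by linarith)
  have e2 : Real.Gamma (x + α) ^ α * ((x + α) * Real.Gamma (x + α)) ^ (1 - α)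
      = Real.Gamma (x + α) * (x + α) ^ (1 - α) := by
    rw [Real.mul_rpow (by positivity) hG.le, ← mul_assoc,
      mul_comm (Real.Gamma (x + α) ^ α), mul_assoc, ← Real.rpow_add hG, mul_comm]
    norm_num
  rw [e2] at h
  exact h

lemma ML_summable {α β : ℝ} (z : ℝ) (hα : 0 < α) (hα1 : α < 1) (hβ : 0 < β) :
    Summable (fun k : ℕ => z ^ k / Real.Gamma (α * k + β)) := by
  apply summable_of_ratio_norm_eventually_le (r := 1/2) (by norm_num)
  have hx : Tendsto (fun k : ℕ => α * k + β) atTop atTop :=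
    tendsto_atTop_add_const_right _ β (tendsto_natCast_atTop_atTop.const_mul_atTop hα)
  have hxa : Tendsto (fun k : ℕ => (α * k + β) ^ α) atTop atTop :=
    (tendsto_rpow_atTop hα).comp hx
  filter_upwards [hx.eventually_ge_atTop (max α 1), hxa.eventually_ge_atTop (4 * |z|)]
    with k h1 h2
  set x : ℝ := α * k + β with hxdef
  have hx1 : (1:ℝ) ≤ x := le_trans (le_max_right _ _) h1
  have hxα : α ≤ x := le_trans (le_max_left _ _) h1
  have hx0 : 0 < x := by linarith
  have hGx : 0 < Real.Gamma x := Real.Gamma_pos_of_pos hx0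
  have hGxa : 0 < Real.Gamma (x + α) := Real.Gamma_pos_of_pos (by linarith)
  have key : 2 * |z| * Real.Gamma x ≤ Real.Gamma (x + α) := by
    have h3 := gamma_ratio hα hα1 hx0
    have h4 : (x + α) ^ (1 - α) ≤ 2 * x ^ (1 - α) := by
      calc (x + α) ^ (1 - α) ≤ (2 * x) ^ (1 - α) :=
            Real.rpow_le_rpow (by linarith) (by linarith) (by linarith)
        _ = 2 ^ (1 - α) * x ^ (1 - α) := Real.mul_rpow (by norm_num) hx0.le
        _ ≤ 2 * x ^ (1 - α) := by
            have : (2:ℝ) ^ (1 - α) ≤ 2 := by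
              calc (2:ℝ) ^ (1 - α) ≤ 2 ^ (1:ℝ) :=
                    Real.rpow_le_rpow_of_exponent_le (by norm_num) (by linarith)
                _ = 2 := Real.rpow_one 2
            exact mul_le_mul_of_nonneg_right this (Real.rpow_nonneg hx0.le _)
    have hsplit : x ^ α * x ^ (1 - α) = x := by
      rw [← Real.rpow_add hx0]; norm_num
    have hQ : 0 < x ^ (1 - α) := Real.rpow_pos_of_pos hx0 _
    nlinarith [mul_le_mul_of_nonneg_left h4 hGxa.le,
      mul_le_mul_of_nonneg_right h2 (mul_nonneg hQ.le hGx.le)]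
  have hcast : α * ((k : ℝ) + 1) + β = x + α := by push_cast [hxdef]; ring
  rw [show ((k + 1 : ℕ) : ℝ) = (k : ℝ) + 1 by push_cast; ring] at *
  simp only [Real.norm_eq_abs, abs_div, pow_succ, abs_mul]
  rw [hcast, abs_of_pos hGxa, abs_of_pos hGx]
  rw [show (1/2:ℝ) * (|z ^ k| / Real.Gamma x) = (|z ^ k| / 2) / Real.Gamma x by ring,
    div_le_div_iff₀ hGxa hGx]
  nlinarith [mul_le_mul_of_nonneg_left key (abs_nonneg (z ^ k))]

lemma beta_integrable {p q t₀ t : ℝ} (hp : 0 < p) (hq : 0 < q) (h : t₀ < t) :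
    IntervalIntegrable (fun s => (t - s) ^ (p - 1) * (s - t₀) ^ (q - 1)) volume t₀ t := by
  set m := (t₀ + t) / 2 with hm
  have hm1 : t₀ < m := by rw [hm]; linarith
  have hm2 : m < t := by rw [hm]; linarith
  apply IntervalIntegrable.trans (b := m)
  · have hg : IntervalIntegrable (fun s => (s - t₀) ^ (q - 1)) volume t₀ m := by
      have := (intervalIntegral.intervalIntegrable_rpow' (a := 0) (b := m - t₀)
        (r := q - 1) (by linarith)).comp_sub_right t₀
      simpa using this
    apply hg.continuousOn_mul
    have : ∀ x ∈ uIcc t₀ m, t - x ≠ 0 := by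
      intro x hx
      rw [uIcc_of_le hm1.le] at hx
      have := hx.2
      intro hc; nlinarith [hx.2]
    exact (continuous_const.sub continuous_id).continuousOn.rpow_const
      (fun x hx => Or.inl (this x hx))
  · have hf : IntervalIntegrable (fun s => (t - s) ^ (p - 1)) volume m t := by
      have := (intervalIntegral.intervalIntegrable_rpow' (a := 0) (b := t - m)
        (r := p - 1) (by linarith)).comp_sub_left t
      simpa using this.symm
    apply hf.mul_continuousOn
    have : ∀ x ∈ uIcc m t, x - t₀ ≠ 0 := by
      intro x hx
      rw [uIcc_of_le hm2.le] at hx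
      intro hc; nlinarith [hx.1]
    exact (continuous_id.sub continuous_const).continuousOn.rpow_const
      (fun x hx => Or.inl (this x hx))

lemma beta01 {p q : ℝ} (hp : 0 < p) (hq : 0 < q) :
    ∫ x in (0:ℝ)..1, x ^ (p - 1) * (1 - x) ^ (q - 1)
      = Real.Gamma p * Real.Gamma q / Real.Gamma (p + q) := by
  have h := Complex.Gamma_mul_Gamma_eq_betaIntegral (s := (p : ℂ)) (t := (q : ℂ))
    (by simpa) (by simpa)
  have hbeta : Complex.betaIntegral p q
      = ((∫ x in (0:ℝ)..1, x ^ (p - 1) * (1 - x) ^ (q - 1) : ℝ) : ℂ) := by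
    rw [Complex.betaIntegral, ← intervalIntegral.integral_ofReal]
    apply intervalIntegral.integral_congr
    intro x hx
    rw [uIcc_of_le (zero_le_one)] at hx
    dsimp only
    rw [Complex.ofReal_mul, Complex.ofReal_cpow hx.1 (p - 1),
      Complex.ofReal_cpow (by linarith [hx.2] : (0:ℝ) ≤ 1 - x) (q - 1)]
    push_cast
    ring
  rw [hbeta, ← Complex.ofReal_add, Complex.Gamma_ofReal, Complex.Gamma_ofReal,
    Complex.Gamma_ofReal, ← Complex.ofReal_mul, ← Complex.ofReal_mul] at h
  have h2 := Complex.ofReal_inj.mp h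
  have hG : Real.Gamma (p + q) ≠ 0 := (Real.Gamma_pos_of_pos (by linarith)).ne'
  field_simp
  linarith [h2]

lemma beta_value {p q t₀ t : ℝ} (hp : 0 < p) (hq : 0 < q) (h : t₀ < t) :
    ∫ s in t₀..t, (t - s) ^ (p - 1) * (s - t₀) ^ (q - 1)
      = Real.Gamma p * Real.Gamma q / Real.Gamma (p + q) * (t - t₀) ^ (p + q - 1) := by
  set c := t - t₀ with hcdef
  have hc : 0 < c := by rw [hcdef]; linarith
  have step1 : (∫ s in t₀..t, (t - s) ^ (p - 1) * (s - t₀) ^ (q - 1))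
      = ∫ x in (0:ℝ)..c, (c - x) ^ (p - 1) * x ^ (q - 1) := by
    have := intervalIntegral.integral_comp_add_left
      (fun s => (t - s) ^ (p - 1) * (s - t₀) ^ (q - 1)) t₀ (a := 0) (b := c)
    rw [add_zero, hcdef] at this
    rw [show t₀ + (t - t₀) = t by ring] at this
    rw [← this]
    apply intervalIntegral.integral_congr
    intro x _
    dsimp only
    have e1 : t - (t₀ + x) = c - x := by rw [hcdef]; ring
    have e2 : t₀ + x - t₀ = x := by ring
    rw [e1, e2]
  have step2 : (∫ x in (0:ℝ)..c, (c - x) ^ (p - 1) * x ^ (q - 1))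
      = c * ∫ x in (0:ℝ)..1, (c - c * x) ^ (p - 1) * (c * x) ^ (q - 1) := by
    have := intervalIntegral.integral_comp_mul_left
      (fun y => (c - y) ^ (p - 1) * y ^ (q - 1)) hc.ne' (a := 0) (b := 1)
    rw [mul_zero, mul_one] at this
    rw [this, smul_eq_mul, ← mul_assoc, mul_inv_cancel₀ hc.ne', one_mul]
  have step3 : (∫ x in (0:ℝ)..1, (c - c * x) ^ (p - 1) * (c * x) ^ (q - 1))
      = c ^ (p - 1) * c ^ (q - 1) *
        ∫ x in (0:ℝ)..1, x ^ (q - 1) * (1 - x) ^ (p - 1) := by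
    rw [← intervalIntegral.integral_const_mul]
    apply intervalIntegral.integral_congr
    intro x hx
    rw [uIcc_of_le zero_le_one] at hx
    dsimp only
    have e1 : c - c * x = c * (1 - x) := by ring
    rw [e1, Real.mul_rpow hc.le (by linarith [hx.2]), Real.mul_rpow hc.le hx.1]
    ring
  rw [step1, step2, step3, beta01 hq hp]
  have hpow : c * (c ^ (p - 1) * c ^ (q - 1)) = c ^ (p + q - 1) := by
    rw [← Real.rpow_add hc, show p - 1 + (q - 1) = p + q - 2 by ring, mul_comm,
      ← Real.rpow_add_one hc.ne', show p + q - 2 + 1 = p + q - 1 by ring]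
  rw [add_comm q p, mul_comm (Real.Gamma q) (Real.Gamma p), ← hpow]
  ring

/-- Riemann–Liouville fractional integral. -/
noncomputable def J (α : ℝ) (v : ℝ → ℝ) (t : ℝ) : ℝ :=
  (1 / Real.Gamma α) * ∫ s in (0:ℝ)..t, (t - s) ^ (α - 1) * v s

theorem fractional_integral_shifted_MittagLeffler_kernel
    (T α lam t₀ : ℝ) (hα : 0 < α) (hα1 : α < 1) (hlam : lam ≠ 0)
    (ht₀ : 0 < t₀) (ht₀T : t₀ < T)
    (u : ℝ → ℝ)
    (hu : ∀ t : ℝ, u t = if t ≤ t₀ then 0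
      else (t - t₀) ^ (α - 1) * ML α α (-lam * (t - t₀) ^ α)) :
    (∀ t : ℝ, t₀ < t →
      -lam * J α u t =
        (t - t₀) ^ (α - 1) * ML α α (-lam * (t - t₀) ^ α) -
          (t - t₀) ^ (α - 1) / Real.Gamma α) ∧
    (∀ t : ℝ, t ≤ t₀ → J α u t = 0) := by
  have hΓα : 0 < Real.Gamma α := Real.Gamma_pos_of_pos hα
  constructor
  · intro t ht
    have hc : 0 < t - t₀ := by linarith
    have ht0 : (0:ℝ) ≤ t := by linarith
    set c : ℝ := t - t₀ with hcdef
    -- the summand functions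
    set F : ℕ → ℝ → ℝ := fun k s => (-lam) ^ k / Real.Gamma (α * k + α) *
      ((t - s) ^ (α - 1) * (s - t₀) ^ (α * (k + 1) - 1)) with hFdef
    have hq : ∀ k : ℕ, (0:ℝ) < α * ((k:ℝ) + 1) := by
      intro k; positivity
    have hΓq : ∀ k : ℕ, 0 < Real.Gamma (α * ((k:ℝ) + 1)) :=
      fun k => Real.Gamma_pos_of_pos (hq k)
    -- integrability of each F k
    have hint : ∀ k : ℕ, IntegrableOn (F k) (Ioc t₀ t) volume := by
      intro k
      apply Integrable.const_mul
      have h2 := beta_integrable (p := α) (q := α * ((k:ℝ) + 1)) hα (hq k) ht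
      rwa [intervalIntegrable_iff, uIoc_of_le ht.le] at h2
    -- value of each beta integral
    have hval : ∀ k : ℕ, (∫ s in Ioc t₀ t, (t - s) ^ (α - 1) * (s - t₀) ^ (α * ((k:ℝ) + 1) - 1))
        = Real.Gamma α * Real.Gamma (α * ((k:ℝ) + 1)) / Real.Gamma (α + α * ((k:ℝ) + 1))
          * c ^ (α + α * ((k:ℝ) + 1) - 1) := by
      intro k
      rw [← intervalIntegral.integral_of_le ht.le]
      exact beta_value hα (hq k) ht
    -- the nonnegativity of the beta integrand on the interval
    have hGnn : ∀ k : ℕ, ∀ s ∈ Ioc t₀ t,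
        0 ≤ (t - s) ^ (α - 1) * (s - t₀) ^ (α * ((k:ℝ) + 1) - 1) := by
      intro k s hs
      have h1 : (0:ℝ) ≤ t - s := by linarith [hs.2]
      have h2 : (0:ℝ) ≤ s - t₀ := by linarith [hs.1]
      exact mul_nonneg (Real.rpow_nonneg h1 _) (Real.rpow_nonneg h2 _)
    -- integral of each F k
    have hFval : ∀ k : ℕ, (∫ s in Ioc t₀ t, F k s)
        = Real.Gamma α * ((-lam) ^ k * c ^ (α * (k:ℝ) + 2 * α - 1)
            / Real.Gamma (α * (k:ℝ) + 2 * α)) := by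
      intro k
      rw [hFdef]
      simp only []
      rw [MeasureTheory.integral_const_mul, hval k]
      have e1 : α * (k:ℝ) + α = α * ((k:ℝ) + 1) := by ring
      have e2 : α + α * ((k:ℝ) + 1) = α * (k:ℝ) + 2 * α := by ring
      rw [e1, e2]
      have h1 := (hΓq k).ne'
      have h2 := (Real.Gamma_pos_of_pos (show (0:ℝ) < α * (k:ℝ) + 2 * α by positivity)).ne'
      field_simp
    -- norm integrals and summability
    have hnorm : ∀ k : ℕ, (∫ s in Ioc t₀ t, ‖F k s‖)
        = (Real.Gamma α * c ^ (2 * α - 1)) *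
            ((|lam| * c ^ α) ^ k / Real.Gamma (α * (k:ℝ) + 2 * α)) := by
      intro k
      have hcongr : ∀ s ∈ Ioc t₀ t, ‖F k s‖ = |(-lam) ^ k / Real.Gamma (α * (k:ℝ) + α)| *
          ((t - s) ^ (α - 1) * (s - t₀) ^ (α * ((k:ℝ) + 1) - 1)) := by
        intro s hs
        rw [hFdef]
        simp only []
        rw [Real.norm_eq_abs, abs_mul, abs_of_nonneg (hGnn k s hs)]
      rw [MeasureTheory.setIntegral_congr_fun measurableSet_Ioc hcongr,
        MeasureTheory.integral_const_mul, hval k]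
      have e1 : α * (k:ℝ) + α = α * ((k:ℝ) + 1) := by ring
      have e2 : α + α * ((k:ℝ) + 1) = α * (k:ℝ) + 2 * α := by ring
      have e3 : c ^ (α * (k:ℝ) + 2 * α - 1) = (c ^ α) ^ k * c ^ (2 * α - 1) := by
        rw [← Real.rpow_natCast (c ^ α) k, ← Real.rpow_mul hc.le, ← Real.rpow_add hc]
        congr 1; ring
      rw [e1, e2, e3, abs_div, abs_pow, abs_neg, abs_of_pos (hΓq k), mul_pow]
      have h1 := (hΓq k).ne'
      have h2 := (Real.Gamma_pos_of_pos (show (0:ℝ) < α * (k:ℝ) + 2 * α by positivity)).ne'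
      field_simp
    have hsummable : Summable fun k : ℕ => ∫ s in Ioc t₀ t, ‖F k s‖ := by
      rw [summable_congr hnorm]
      exact (ML_summable (|lam| * c ^ α) hα hα1 (by linarith)).mul_left _
    -- pointwise tsum identity
    have htsum : ∀ s ∈ Ioc t₀ t, (t - s) ^ (α - 1) * u s = ∑' k : ℕ, F k s := by
      intro s hs
      have hx : (0:ℝ) < s - t₀ := by linarith [hs.1]
      rw [hu s, if_neg (not_le.mpr hs.1), ML, ← mul_assoc, ← tsum_mul_left]
      apply tsum_congr
      intro k
      rw [hFdef]
      simp only []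
      rw [mul_pow, ← Real.rpow_natCast ((s - t₀) ^ α) k, ← Real.rpow_mul hx.le,
        show α * ((k:ℝ) + 1) - 1 = α - 1 + α * (k:ℝ) by ring, Real.rpow_add hx]
      ring
    -- compute J
    have hJ : J α u t = ∑' k : ℕ, (-lam) ^ k * c ^ (α * (k:ℝ) + 2 * α - 1)
        / Real.Gamma (α * (k:ℝ) + 2 * α) := by
      rw [J, intervalIntegral.integral_of_le ht0]
      have step1 : (∫ s in Ioc 0 t, (t - s) ^ (α - 1) * u s)
          = ∫ s in Ioc 0 t, (Ioc t₀ t).indicator (fun s => (t - s) ^ (α - 1) * u s) s := by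
        apply MeasureTheory.setIntegral_congr_fun measurableSet_Ioc
        intro s hs
        by_cases h' : t₀ < s
        · rw [Set.indicator_of_mem (Set.mem_Ioc.mpr ⟨h', hs.2⟩)]
        · rw [Set.indicator_of_notMem (fun hmem => h' hmem.1)]
          dsimp only
          rw [hu s, if_pos (not_lt.mp h'), mul_zero]
      rw [step1, MeasureTheory.setIntegral_indicator measurableSet_Ioc,
        show Ioc 0 t ∩ Ioc t₀ t = Ioc t₀ t by
          rw [Set.Ioc_inter_Ioc, sup_eq_right.mpr ht₀.le, inf_idem],
        MeasureTheory.setIntegral_congr_fun measurableSet_Ioc htsum,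
        ← MeasureTheory.integral_tsum_of_summable_integral_norm hint hsummable]
      have : ∀ k : ℕ, (∫ s in Ioc t₀ t, F k s)
          = Real.Gamma α * ((-lam) ^ k * c ^ (α * (k:ℝ) + 2 * α - 1)
              / Real.Gamma (α * (k:ℝ) + 2 * α)) := hFval
      rw [tsum_congr this, tsum_mul_left, ← mul_assoc]
      rw [one_div, inv_mul_cancel₀ hΓα.ne', one_mul]
    -- the auxiliary series h
    set h : ℕ → ℝ := fun k => (-lam) ^ k * c ^ (α * (k:ℝ) + α - 1)
        / Real.Gamma (α * (k:ℝ) + α) with hhdef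
    have hterm : ∀ k : ℕ, c ^ (α - 1) * ((-lam * c ^ α) ^ k / Real.Gamma (α * (k:ℝ) + α))
        = h k := by
      intro k
      rw [hhdef]
      simp only []
      rw [mul_pow, ← Real.rpow_natCast (c ^ α) k, ← Real.rpow_mul hc.le,
        show α * (k:ℝ) + α - 1 = α - 1 + α * (k:ℝ) by ring, Real.rpow_add hc]
      ring
    have hhsum : Summable h := by
      rw [← summable_congr hterm]
      exact (ML_summable (-lam * c ^ α) hα hα1 hα).mul_left _
    have hB : c ^ (α - 1) * ML α α (-lam * c ^ α) = ∑' k, h k := by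
      rw [ML, ← tsum_mul_left]
      exact tsum_congr hterm
    have hC : h 0 = c ^ (α - 1) / Real.Gamma α := by
      rw [hhdef]
      norm_num
    have hshift : ∀ k : ℕ, -lam * ((-lam) ^ k * c ^ (α * (k:ℝ) + 2 * α - 1)
        / Real.Gamma (α * (k:ℝ) + 2 * α)) = h (k + 1) := by
      intro k
      rw [hhdef]
      simp only []
      push_cast
      rw [show α * ((k:ℝ) + 1) + α - 1 = α * (k:ℝ) + 2 * α - 1 by ring,
        show α * ((k:ℝ) + 1) + α = α * (k:ℝ) + 2 * α by ring, pow_succ]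
      ring
    rw [hJ, ← tsum_mul_left, tsum_congr hshift, hB, ← hC]
    rw [Summable.tsum_eq_zero_add hhsum]
    ring
  · intro t htle
    rw [J]
    have hz : EqOn (fun s => (t - s) ^ (α - 1) * u s) (fun _ => (0:ℝ)) (uIcc 0 t) := by
      intro s hs
      have hs' : s ≤ t₀ := by
        rcases Set.mem_uIcc.mp hs with h1 | h1
        · linarith [h1.2]
        · linarith [h1.2]
      dsimp only
      rw [hu s, if_pos hs', mul_zero]
    rw [intervalIntegral.integral_congr hz]
    simp
end

section
/- The fractional derivative of a convolution: for 0 < α < 1, u in the range J^α(L²(0,T)) and g ∈ L¹(0,T), the convolution u*g lies in J^α(L²(0,T)) and (J^α)^{-1}(u*g) = ((J^α)^{-1}u) * g, where (u*g)(t) = ∫₀ᵗ u(t−s)g(s) ds. -/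
open MeasureTheory Real Set Filter
open scoped Convolution ENNReal NNReal

/-- Truncated convolution on (0,t). -/
noncomputable def conv (u g : ℝ → ℝ) (t : ℝ) : ℝ :=
  ∫ s in (0:ℝ)..t, u (t - s) * g s

/-- a.e. points differ from a fixed point. -/
lemma ae_ne_point (t : ℝ) : ∀ᵐ s : ℝ, s ≠ t := by
  rw [ae_iff]
  simp only [ne_eq, not_not, setOf_eq_eq_singleton]
  exact measure_singleton t

/-- The truncated convolution agrees with the full-line convolution of the
indicator-extended functions, for `t ∈ (0, T)`. -/
lemma conv_eq_convolution {T : ℝ} (a b : ℝ → ℝ) {t : ℝ} (ht : t ∈ Set.Ioo 0 T) :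
    conv a b t
      = ((Set.Ioo (0:ℝ) T).indicator a ⋆[ContinuousLinearMap.mul ℝ ℝ]
          (Set.Ioo (0:ℝ) T).indicator b) t := by
  obtain ⟨ht0, htT⟩ := ht
  have h1 : conv a b t = ∫ s in (0:ℝ)..t, a s * b (t - s) := by
    have h := intervalIntegral.integral_comp_sub_left (a := (0:ℝ)) (b := t)
      (fun x => a x * b (t - x)) t
    simp only [sub_self, sub_zero, sub_sub_cancel] at h
    rw [conv, ← h]
  have h2 : (fun s => (Set.Ioo (0:ℝ) T).indicator a s * (Set.Ioo (0:ℝ) T).indicator b (t - s))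
      = (Set.Ioo (0:ℝ) t).indicator (fun s => a s * b (t - s)) := by
    funext s
    by_cases hs : s ∈ Set.Ioo (0:ℝ) t
    · rw [Set.indicator_of_mem hs,
        Set.indicator_of_mem (show s ∈ Set.Ioo (0:ℝ) T from ⟨hs.1, hs.2.trans htT⟩),
        Set.indicator_of_mem (show t - s ∈ Set.Ioo (0:ℝ) T from
          ⟨by simp [hs.2], by have := hs.1; linarith⟩)]
    · rw [Set.indicator_of_notMem hs]
      simp only [Set.mem_Ioo, not_and, not_lt] at hs
      by_cases hs0 : 0 < s
      · have hts : t ≤ s := hs hs0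
        rw [Set.indicator_of_notMem (show t - s ∉ Set.Ioo (0:ℝ) T by
          simp only [Set.mem_Ioo, not_and, not_lt]; intro h; linarith), mul_zero]
      · rw [Set.indicator_of_notMem (show s ∉ Set.Ioo (0:ℝ) T by
          simp only [Set.mem_Ioo, not_and, not_lt]; intro h; exact absurd h hs0), zero_mul]
  calc conv a b t = ∫ s in (0:ℝ)..t, a s * b (t - s) := h1
    _ = ∫ s in Set.Ioc (0:ℝ) t, a s * b (t - s) := intervalIntegral.integral_of_le ht0.le
    _ = ∫ s in Set.Ioo (0:ℝ) t, a s * b (t - s) := integral_Ioc_eq_integral_Ioo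
    _ = ∫ s, (Set.Ioo (0:ℝ) t).indicator (fun s => a s * b (t - s)) s :=
        (integral_indicator measurableSet_Ioo).symm
    _ = ∫ s, (Set.Ioo (0:ℝ) T).indicator a s * (Set.Ioo (0:ℝ) T).indicator b (t - s) := by
        rw [h2]
    _ = _ := by rw [convolution_def]; rfl

/-- Convolution of two functions supported in `(0, ∞)` vanishes on `(-∞, 0]`. -/
lemma convolution_eq_zero_of_nonpos {A B : ℝ → ℝ} (hA : ∀ s ≤ 0, A s = 0)
    (hB : ∀ s ≤ 0, B s = 0) {τ : ℝ} (hτ : τ ≤ 0) :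
    (A ⋆[ContinuousLinearMap.mul ℝ ℝ] B) τ = 0 := by
  rw [convolution_def]
  have h : (fun s => ContinuousLinearMap.mul ℝ ℝ (A s) (B (τ - s))) = fun _ => (0:ℝ) := by
    funext s
    rcases le_or_gt s 0 with h | h
    · simp [hA s h]
    · simp [hB (τ - s) (by linarith)]
  rw [h, integral_zero]

/-- Young's inequality, special case `L² ⋆ L¹ ⊆ L²` on `ℝ`. -/
lemma young_two_one {W G : ℝ → ℝ} (hWm : Measurable W) (hGm : Measurable G)
    (hW : MemLp W 2 volume) (hG : Integrable G volume) :
    MemLp (W ⋆[ContinuousLinearMap.mul ℝ ℝ] G) 2 volume := by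
  have hsm : AEStronglyMeasurable (W ⋆[ContinuousLinearMap.mul ℝ ℝ] G) volume :=
    (hWm.aestronglyMeasurable.convolution_integrand (ContinuousLinearMap.mul ℝ ℝ)
      hGm.aestronglyMeasurable).integral_prod_right'
  refine ⟨hsm, ?_⟩
  rw [eLpNorm_lt_top_iff_lintegral_rpow_enorm_lt_top (by norm_num) (by norm_num)]
  have htwo : (2 : ℝ≥0∞).toReal = (2:ℝ) := by norm_num
  rw [htwo]
  set φ : ℝ → ℝ≥0∞ := fun s => (‖W s‖₊ : ℝ≥0∞) with hφdef
  set γ : ℝ → ℝ≥0∞ := fun s => (‖G s‖₊ : ℝ≥0∞) with hγdef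
  have hφm : Measurable φ := hWm.enorm
  have hγm : Measurable γ := hGm.enorm
  set C := ∫⁻ s, γ s with hCdef
  have hC : C ≠ ⊤ := hG.2.ne
  set D := ∫⁻ s, φ s ^ (2:ℝ) with hDdef
  have hD : D ≠ ⊤ := by
    have h2 := hW.2
    rw [eLpNorm_lt_top_iff_lintegral_rpow_enorm_lt_top (by norm_num) (by norm_num), htwo] at h2
    exact h2.ne
  have hconj : Real.HolderConjugate 2 2 := Real.HolderConjugate.two_two
  have half_mul : ∀ y : ℝ≥0∞, y ^ (1/2:ℝ) * y ^ (1/2:ℝ) = y := by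
    intro y
    rw [← pow_two, ← ENNReal.rpow_natCast (y ^ (1/2:ℝ)) 2, ← ENNReal.rpow_mul]
    norm_num
  have half_sq : ∀ y : ℝ≥0∞, (y ^ (1/2:ℝ)) ^ (2:ℝ) = y := by
    intro y
    rw [← ENNReal.rpow_mul]
    norm_num
  have hpt : ∀ t : ℝ, (‖(W ⋆[ContinuousLinearMap.mul ℝ ℝ] G) t‖₊ : ℝ≥0∞) ^ (2:ℝ)
      ≤ (∫⁻ s, φ s ^ (2:ℝ) * γ (t - s)) * C := by
    intro t
    have h0 : (‖(W ⋆[ContinuousLinearMap.mul ℝ ℝ] G) t‖₊ : ℝ≥0∞) ≤ ∫⁻ s, φ s * γ (t - s) := by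
      rw [convolution_def]
      refine (enorm_integral_le_lintegral_enorm _).trans (le_of_eq ?_)
      refine lintegral_congr fun s => ?_
      simp [hφdef, hγdef, nnnorm_mul, ENNReal.coe_mul, enorm_eq_nnnorm]
    have hγcomp : Measurable (fun s => γ (t - s)) :=
      hγm.comp (measurable_const.sub measurable_id)
    have hCS : (∫⁻ s, φ s * γ (t - s))
        ≤ (∫⁻ s, φ s ^ (2:ℝ) * γ (t - s)) ^ (1/2:ℝ) * (∫⁻ s, γ (t - s)) ^ (1/2:ℝ) := by
      have hf : AEMeasurable (fun s => φ s * γ (t - s) ^ (1/2:ℝ)) volume :=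
        (hφm.mul (hγcomp.pow_const _)).aemeasurable
      have hg2 : AEMeasurable (fun s => γ (t - s) ^ (1/2:ℝ)) volume :=
        (hγcomp.pow_const _).aemeasurable
      have h := ENNReal.lintegral_mul_le_Lp_mul_Lq volume hconj hf hg2
      simp only [Pi.mul_apply] at h
      calc (∫⁻ s, φ s * γ (t - s))
          = ∫⁻ s, (φ s * γ (t - s) ^ (1/2:ℝ)) * γ (t - s) ^ (1/2:ℝ) := by
            refine lintegral_congr fun s => ?_
            rw [mul_assoc, half_mul]
        _ ≤ (∫⁻ s, (φ s * γ (t - s) ^ (1/2:ℝ)) ^ (2:ℝ)) ^ (1/2:ℝ)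
              * (∫⁻ s, (γ (t - s) ^ (1/2:ℝ)) ^ (2:ℝ)) ^ (1/2:ℝ) := h
        _ = (∫⁻ s, φ s ^ (2:ℝ) * γ (t - s)) ^ (1/2:ℝ) * (∫⁻ s, γ (t - s)) ^ (1/2:ℝ) := by
            congr 1
            · congr 1
              refine lintegral_congr fun s => ?_
              rw [ENNReal.mul_rpow_of_nonneg _ _ (by norm_num), half_sq]
            · congr 1
              exact lintegral_congr fun s => half_sq _
    have hγtr : (∫⁻ s, γ (t - s)) = C :=
      (Measure.measurePreserving_sub_left volume t).lintegral_comp hγm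
    calc (‖(W ⋆[ContinuousLinearMap.mul ℝ ℝ] G) t‖₊ : ℝ≥0∞) ^ (2:ℝ)
        ≤ ((∫⁻ s, φ s ^ (2:ℝ) * γ (t - s)) ^ (1/2:ℝ) * C ^ (1/2:ℝ)) ^ (2:ℝ) := by
          refine ENNReal.rpow_le_rpow ?_ (by norm_num)
          exact h0.trans (by rw [← hγtr]; exact hCS)
      _ = (∫⁻ s, φ s ^ (2:ℝ) * γ (t - s)) * C := by
          rw [ENNReal.mul_rpow_of_nonneg _ _ (by norm_num), half_sq, half_sq]
  have hprodm : Measurable (Function.uncurry fun t s => φ s ^ (2:ℝ) * γ (t - s)) :=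
    ((hφm.comp measurable_snd).pow_const _).mul
      (hγm.comp (measurable_fst.sub measurable_snd))
  calc (∫⁻ t, (‖(W ⋆[ContinuousLinearMap.mul ℝ ℝ] G) t‖₊ : ℝ≥0∞) ^ (2:ℝ))
      ≤ ∫⁻ t, (∫⁻ s, φ s ^ (2:ℝ) * γ (t - s)) * C := lintegral_mono hpt
    _ = (∫⁻ t, ∫⁻ s, φ s ^ (2:ℝ) * γ (t - s)) * C :=
        lintegral_mul_const' C _ hC
    _ = (∫⁻ s, ∫⁻ t, φ s ^ (2:ℝ) * γ (t - s)) * C := by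
        rw [lintegral_lintegral_swap hprodm.aemeasurable]
    _ = (∫⁻ s, φ s ^ (2:ℝ) * C) * C := by
        congr 1
        refine lintegral_congr fun s => ?_
        rw [lintegral_const_mul' _ _
          (ENNReal.rpow_lt_top_of_nonneg (by norm_num) ENNReal.coe_ne_top).ne]
        congr 1
        exact (measurePreserving_sub_right volume s).lintegral_comp hγm
    _ = D * C * C := by rw [lintegral_mul_const' C _ hC]
    _ < ⊤ := by
        refine ENNReal.mul_lt_top ?_ hC.lt_top
        exact ENNReal.mul_lt_top hD.lt_top hC.lt_top

theorem fractional_derivative_of_convolution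
    (T α : ℝ) (hT : 0 < T) (hα : 0 < α) (hα1 : α < 1)
    (u w g : ℝ → ℝ)
    (hw : MemLp w 2 (volume.restrict (Set.Ioo 0 T)))
    (hg : IntegrableOn g (Set.Ioo 0 T))
    (hu : ∀ t ∈ Set.Ioo (0:ℝ) T, u t = J α w t) :
    MemLp (conv w g) 2 (volume.restrict (Set.Ioo 0 T)) ∧
      ∀ᵐ t ∂(volume.restrict (Set.Ioo 0 T)), conv u g t = J α (conv w g) t := by
  classical
  haveI : IsFiniteMeasure (volume.restrict (Set.Ioo (0:ℝ) T)) :=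
    ⟨by rw [Measure.restrict_apply_univ]; exact measure_Ioo_lt_top⟩
  set w' := hw.1.mk w with hw'def
  have hw'sm : StronglyMeasurable w' := hw.1.stronglyMeasurable_mk
  have hww' : w =ᵐ[volume.restrict (Set.Ioo 0 T)] w' := hw.1.ae_eq_mk
  set g' := hg.1.mk g with hg'def
  have hg'sm : StronglyMeasurable g' := hg.1.stronglyMeasurable_mk
  have hgg' : g =ᵐ[volume.restrict (Set.Ioo 0 T)] g' := hg.1.ae_eq_mk
  set W : ℝ → ℝ := (Set.Ioo (0:ℝ) T).indicator w' with hWdef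
  set G : ℝ → ℝ := (Set.Ioo (0:ℝ) T).indicator g' with hGdef
  set K : ℝ → ℝ := (Set.Ioo (0:ℝ) T).indicator (fun r => r ^ (α - 1)) with hKdef
  have hWm : Measurable W := hw'sm.measurable.indicator measurableSet_Ioo
  have hGm : Measurable G := hg'sm.measurable.indicator measurableSet_Ioo
  have hrpowm : Measurable (fun r : ℝ => r ^ (α - 1)) :=
    measurable_of_continuousOn_compl_singleton 0 (fun x hx =>
      (Real.continuousAt_rpow_const x _ (Or.inl hx)).continuousWithinAt)
  have hKm : Measurable K := hrpowm.indicator measurableSet_Ioo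
  have hW2 : MemLp W 2 volume :=
    (memLp_indicator_iff_restrict measurableSet_Ioo).mpr (hw.ae_eq hww')
  have hW1 : Integrable W volume :=
    (integrable_indicator_iff measurableSet_Ioo).mpr ((hw.ae_eq hww').integrable one_le_two)
  have hG1 : Integrable G volume :=
    (integrable_indicator_iff measurableSet_Ioo).mpr (hg.congr hgg')
  have hK1 : Integrable K volume := by
    refine (integrable_indicator_iff measurableSet_Ioo).mpr ?_
    have h := intervalIntegral.intervalIntegrable_rpow'
      (a := 0) (b := T) (show (-1:ℝ) < α - 1 by linarith)
    exact h.1.mono_set Set.Ioo_subset_Ioc_self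
  have hW0 : ∀ s ≤ (0:ℝ), W s = 0 := fun s hs =>
    Set.indicator_of_notMem (fun hmem => absurd hmem.1 (not_lt.mpr hs)) _
  have hG0 : ∀ s ≤ (0:ℝ), G s = 0 := fun s hs =>
    Set.indicator_of_notMem (fun hmem => absurd hmem.1 (not_lt.mpr hs)) _
  have hK0 : ∀ s ≤ (0:ℝ), K s = 0 := fun s hs =>
    Set.indicator_of_notMem (fun hmem => absurd hmem.1 (not_lt.mpr hs)) _
  have hWG0 : ∀ τ ≤ (0:ℝ), (W ⋆[ContinuousLinearMap.mul ℝ ℝ] G) τ = 0 :=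
    fun τ hτ => convolution_eq_zero_of_nonpos hW0 hG0 hτ
  have hgae : ∀ᵐ s : ℝ, s ∈ Set.Ioo (0:ℝ) T → g s = g' s :=
    (ae_restrict_iff' measurableSet_Ioo).mp hgg'
  have hwae : ∀ᵐ s : ℝ, s ∈ Set.Ioo (0:ℝ) T → w s = w' s :=
    (ae_restrict_iff' measurableSet_Ioo).mp hww'
  -- replacing `g` by `g'` in truncated convolutions
  have hbridge_g : ∀ (v : ℝ → ℝ), ∀ t ∈ Set.Ioo (0:ℝ) T, conv v g t = conv v g' t := by
    intro v t ht
    rw [conv, conv]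
    refine intervalIntegral.integral_congr_ae ?_
    filter_upwards [hgae] with s h1 hs
    rw [Set.uIoc_of_le ht.1.le] at hs
    rw [h1 ⟨hs.1, lt_of_le_of_lt hs.2 ht.2⟩]
  have hbridge_w : ∀ t ∈ Set.Ioo (0:ℝ) T, conv w g' t = conv w' g' t := by
    intro t ht
    rw [conv, conv]
    refine intervalIntegral.integral_congr_ae ?_
    have hw2 : ∀ᵐ s : ℝ, (t - s) ∈ Set.Ioo (0:ℝ) T → w (t - s) = w' (t - s) :=
      (Measure.measurePreserving_sub_left volume t).quasiMeasurePreserving.ae hwae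
    filter_upwards [hw2, ae_ne_point t] with s h2 h3 hs
    rw [Set.uIoc_of_le ht.1.le] at hs
    have hts : t - s ∈ Set.Ioo (0:ℝ) T :=
      ⟨sub_pos.mpr (hs.2.lt_of_ne h3), by have := hs.1; have := ht.2; linarith⟩
    rw [h2 hts]
  have hbridge : ∀ t ∈ Set.Ioo (0:ℝ) T, conv w g t = conv w' g' t :=
    fun t ht => (hbridge_g w t ht).trans (hbridge_w t ht)
  have hWGconv : ∀ t ∈ Set.Ioo (0:ℝ) T,
      conv w g t = (W ⋆[ContinuousLinearMap.mul ℝ ℝ] G) t :=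
    fun t ht => (hbridge t ht).trans (conv_eq_convolution w' g' ht)
  have hWG2 : MemLp (W ⋆[ContinuousLinearMap.mul ℝ ℝ] G) 2 volume :=
    young_two_one hWm hGm hW2 hG1
  have part1 : MemLp (conv w g) 2 (volume.restrict (Set.Ioo 0 T)) := by
    refine (hWG2.restrict _).ae_eq ?_
    refine (ae_restrict_iff' measurableSet_Ioo).mpr
      (Filter.Eventually.of_forall fun t ht => ?_)
    exact (hWGconv t ht).symm
  have hJbridge : ∀ τ ∈ Set.Ioo (0:ℝ) T, J α w τ = J α w' τ := by
    intro τ hτ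
    rw [J, J]
    congr 1
    refine intervalIntegral.integral_congr_ae ?_
    filter_upwards [hwae] with s h1 hs
    rw [Set.uIoc_of_le hτ.1.le] at hs
    rw [h1 ⟨hs.1, lt_of_le_of_lt hs.2 hτ.2⟩]
  have hu2 : ∀ τ ∈ Set.Ioo (0:ℝ) T,
      u τ = (1 / Real.Gamma α) * (K ⋆[ContinuousLinearMap.mul ℝ ℝ] W) τ := by
    intro τ hτ
    rw [hu τ hτ, hJbridge τ hτ, J]
    congr 1
    exact conv_eq_convolution (fun r => r ^ (α - 1)) w' hτ
  have hfg : ∀ᵐ y : ℝ ∂volume,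
      ConvolutionExistsAt K W y (ContinuousLinearMap.mul ℝ ℝ) volume :=
    hK1.ae_convolution_exists (L := ContinuousLinearMap.mul ℝ ℝ) hW1
  have hgk : ∀ᵐ x : ℝ ∂volume, ConvolutionExistsAt (fun x => ‖W x‖) (fun x => ‖G x‖) x
      (ContinuousLinearMap.mul ℝ ℝ) volume :=
    hW1.norm.ae_convolution_exists (L := ContinuousLinearMap.mul ℝ ℝ) hG1.norm
  have hWG1 : Integrable ((fun x => ‖W x‖) ⋆[ContinuousLinearMap.mul ℝ ℝ]
      fun x => ‖G x‖) volume :=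
    hW1.norm.integrable_convolution (L := ContinuousLinearMap.mul ℝ ℝ) hG1.norm
  have hfgk : ∀ᵐ t : ℝ ∂volume, ConvolutionExistsAt (fun x => ‖K x‖)
      ((fun x => ‖W x‖) ⋆[ContinuousLinearMap.mul ℝ ℝ] fun x => ‖G x‖) t
      (ContinuousLinearMap.mul ℝ ℝ) volume :=
    hK1.norm.ae_convolution_exists (L := ContinuousLinearMap.mul ℝ ℝ) hWG1
  have hassoc : ∀ᵐ t : ℝ ∂volume,
      ((K ⋆[ContinuousLinearMap.mul ℝ ℝ] W) ⋆[ContinuousLinearMap.mul ℝ ℝ] G) t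
        = (K ⋆[ContinuousLinearMap.mul ℝ ℝ] (W ⋆[ContinuousLinearMap.mul ℝ ℝ] G)) t := by
    filter_upwards [hfgk] with t ht
    exact convolution_assoc (ContinuousLinearMap.mul ℝ ℝ) (ContinuousLinearMap.mul ℝ ℝ)
      (ContinuousLinearMap.mul ℝ ℝ) (ContinuousLinearMap.mul ℝ ℝ)
      (fun x y z => mul_assoc x y z) hKm.aestronglyMeasurable hWm.aestronglyMeasurable
      hGm.aestronglyMeasurable hfg hgk ht
  refine ⟨part1, ?_⟩
  filter_upwards [ae_restrict_of_ae hassoc, ae_restrict_mem measurableSet_Ioo] with t hat ht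
  -- left-hand side
  have l1 : conv u g t = conv u g' t := hbridge_g u t ht
  have l2 : conv u g' t
      = conv (fun τ => (1 / Real.Gamma α) * (K ⋆[ContinuousLinearMap.mul ℝ ℝ] W) τ) g' t := by
    rw [conv, conv]
    refine intervalIntegral.integral_congr_ae ?_
    filter_upwards [ae_ne_point t] with s hsne hs
    rw [Set.uIoc_of_le ht.1.le] at hs
    have hts : t - s ∈ Set.Ioo (0:ℝ) T :=
      ⟨sub_pos.mpr (hs.2.lt_of_ne hsne), by have := hs.1; have := ht.2; linarith⟩
    rw [hu2 _ hts]
  have l3 : conv (fun τ => (1 / Real.Gamma α) * (K ⋆[ContinuousLinearMap.mul ℝ ℝ] W) τ) g' t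
      = (1 / Real.Gamma α)
          * conv (fun τ => (K ⋆[ContinuousLinearMap.mul ℝ ℝ] W) τ) g' t := by
    rw [conv, conv]
    simp only [mul_assoc]
    rw [intervalIntegral.integral_const_mul]
  have l4 : conv (fun τ => (K ⋆[ContinuousLinearMap.mul ℝ ℝ] W) τ) g' t
      = ((K ⋆[ContinuousLinearMap.mul ℝ ℝ] W) ⋆[ContinuousLinearMap.mul ℝ ℝ] G) t := by
    rw [conv_eq_convolution _ _ ht, convolution_def, convolution_def]
    refine integral_congr_ae (Filter.Eventually.of_forall fun s => ?_)
    simp only [ContinuousLinearMap.mul_apply']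
    rw [hGdef]
    by_cases hsmem : s ∈ Set.Ioo (0:ℝ) T
    · rw [Set.indicator_of_mem hsmem]
    · rw [Set.indicator_of_notMem hsmem, zero_mul]
      simp only [Set.mem_Ioo, not_and, not_lt] at hsmem
      by_cases hs0 : 0 < s
      · have hGz : (Set.Ioo (0:ℝ) T).indicator g' (t - s) = 0 :=
          Set.indicator_of_notMem
            (fun hmem => absurd hmem.1 (by have := hsmem hs0; have := ht.2; linarith)) _
        rw [hGz, mul_zero]
      · have hKWz : (K ⋆[ContinuousLinearMap.mul ℝ ℝ] W) s = 0 :=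
          convolution_eq_zero_of_nonpos hK0 hW0 (not_lt.mp hs0)
        rw [hKWz, zero_mul]
  -- right-hand side
  have r1 : J α (conv w g) t
      = (1 / Real.Gamma α)
          * (K ⋆[ContinuousLinearMap.mul ℝ ℝ] (W ⋆[ContinuousLinearMap.mul ℝ ℝ] G)) t := by
    rw [J]
    congr 1
    have h0 : (∫ s in (0:ℝ)..t, (t - s) ^ (α - 1) * conv w g s)
        = conv (fun r => r ^ (α - 1)) (conv w g) t := rfl
    rw [h0, conv_eq_convolution _ _ ht, convolution_def, convolution_def]
    refine integral_congr_ae (Filter.Eventually.of_forall fun s => ?_)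
    simp only [ContinuousLinearMap.mul_apply']
    by_cases hsmem : s ∈ Set.Ioo (0:ℝ) T
    · rw [show ((Set.Ioo (0:ℝ) T).indicator (fun r => r ^ (α - 1)) : ℝ → ℝ) s = K s from rfl]
      congr 1
      rcases le_or_gt (t - s) 0 with hτ | hτ
      · rw [Set.indicator_of_notMem (fun hmem => absurd hmem.1 (not_lt.mpr hτ)),
          hWG0 _ hτ]
      · have hτT : t - s ∈ Set.Ioo (0:ℝ) T :=
          ⟨hτ, by have := hsmem.1; have := ht.2; linarith⟩
        rw [Set.indicator_of_mem hτT]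
        exact hWGconv _ hτT
    · rw [Set.indicator_of_notMem hsmem, zero_mul,
        show K s = 0 from Set.indicator_of_notMem hsmem _, zero_mul]
  rw [l1, l2, l3, l4, hat, r1]
end
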